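/- Let 0 < γ < 2, 0 < r < ∞, let M : ℕ → ℝ be a strongly regular sequence, let d ≥ 1, and let a_1, …, a_d ∈ A_M(S_{γ,r}). Let h ∈ A^∞(S_{γ,r}) be flat (h^{(j)}(z) → 0 as z → 0 in S_{γ,r} for every j) and satisfy h(z)^d + a_1(z)·h(z)^{d-1} + ⋯ + a_d(z) = 0 for all z ∈ S_{γ,r}. Then there exist 0 < r'' ≤ r and positive constants c_1, c_2 such that |h(z)| ≤ c_1·h_M(c_2·|z|) for all z ∈ S_{γ,r''}. -/

import Mathlib

open Set Filter Topology Complex ENNReal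

noncomputable section

/-- The sector `S_{γ,r}` of the complex plane: `0 < |z| < r`, `|arg z| < γπ/2`. -/
def Sector (γ : ℝ) (r : ℝ≥0∞) : Set ℂ :=
  {z : ℂ | z ≠ 0 ∧ |Complex.arg z| < γ * Real.pi / 2 ∧ (‖z‖₊ : ℝ≥0∞) < r}

/-- `f ∈ A^∞(S_{γ,r})`: `f` is holomorphic on the sector and all its derivatives
are bounded there. -/
def AInfty (γ : ℝ) (r : ℝ≥0∞) (f : ℂ → ℂ) : Prop :=
  DifferentiableOn ℂ f (Sector γ r) ∧
  ∀ j : ℕ, ∃ B : ℝ, ∀ z ∈ Sector γ r, ‖iteratedDeriv j f z‖ ≤ B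

/-- `f ∈ A_M(S_{γ,r})`: `f ∈ A^∞(S_{γ,r})` with Denjoy–Carleman bounds. -/
def AClass (M : ℕ → ℝ) (γ : ℝ) (r : ℝ≥0∞) (f : ℂ → ℂ) : Prop :=
  AInfty γ r f ∧
  ∃ C > (0:ℝ), ∃ σ > (0:ℝ), ∀ (j : ℕ), ∀ z ∈ Sector γ r,
    ‖iteratedDeriv j f z‖ ≤ C * σ ^ j * (Nat.factorial j : ℝ) * M j

/-- `f` is flat on `S_{γ,r}`: every derivative tends to `0` at the vertex. -/
def FlatOn (γ : ℝ) (r : ℝ≥0∞) (f : ℂ → ℂ) : Prop :=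
  ∀ j : ℕ, Tendsto (iteratedDeriv j f) (𝓝[Sector γ r] 0) (𝓝 0)

/-- The function `h_M` associated with the sequence `M`. -/
def hFun (M : ℕ → ℝ) (t : ℝ) : ℝ := if t = 0 then 0 else ⨅ j : ℕ, t ^ j * M j

/-- `M` is a strongly regular sequence: positive, normalized, increasing,
log-convex, of moderate growth and strongly non-quasianalytic. -/
def StronglyRegular (M : ℕ → ℝ) : Prop :=
  (∀ j, 0 < M j) ∧ M 0 = 1 ∧ Monotone M ∧
  (∀ j : ℕ, (M (j+1))^2 ≤ M j * M (j+2)) ∧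
  (∃ A : ℝ, ∀ j k : ℕ, 1 ≤ j + k →
    (M (j+k) / (M j * M k)) ^ ((1:ℝ)/((j:ℝ)+(k:ℝ))) ≤ A) ∧
  (Summable (fun j : ℕ => M j / (((j:ℝ)+1) * M (j+1))) ∧
   ∃ A : ℝ, ∀ k : ℕ,
     M (k+1) / M k * ∑' j : ℕ, M (j+k) / (((j:ℝ)+(k:ℝ)+1) * M (j+k+1)) ≤ A)

namespace FRB

variable {γ : ℝ} {r r' : ℝ≥0∞}

lemma sector_mono (h : r' ≤ r) : Sector γ r' ⊆ Sector γ r :=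
  fun z hz => ⟨hz.1, hz.2.1, lt_of_lt_of_le hz.2.2 h⟩

lemma arg_lt_pi_of_mem (hγ2 : γ < 2) {z : ℂ} (hz : z ∈ Sector γ r) : |Complex.arg z| < Real.pi := by
  have hπ := Real.pi_pos
  calc |Complex.arg z| < γ * Real.pi / 2 := hz.2.1
    _ < Real.pi := by nlinarith

lemma continuousAt_arg_of_mem (hγ2 : γ < 2) {z : ℂ} (hz : z ∈ Sector γ r) :
    ContinuousAt Complex.arg z := by
  apply Complex.continuousAt_arg
  rw [Complex.mem_slitPlane_iff]
  by_contra hcon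
  push_neg at hcon
  obtain ⟨h1, h2⟩ := hcon
  rcases lt_or_eq_of_le h1 with h1 | h1
  · have harg : Complex.arg z = Real.pi := Complex.arg_eq_pi_iff.2 ⟨h1, h2⟩
    have h3 := arg_lt_pi_of_mem hγ2 hz
    rw [harg, abs_of_pos Real.pi_pos] at h3
    exact lt_irrefl _ h3
  · exact hz.1 (Complex.ext (by simpa using h1) (by simpa using h2))

lemma isOpen_sector (hγ2 : γ < 2) : IsOpen (Sector γ r) := by
  rw [isOpen_iff_mem_nhds]
  intro z hz
  have h1 : ∀ᶠ w : ℂ in 𝓝 z, w ≠ 0 := by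
    exact (isOpen_compl_singleton).eventually_mem (hz.1 : z ∈ ({0}ᶜ : Set ℂ))
  have h2 : ∀ᶠ w : ℂ in 𝓝 z, |Complex.arg w| < γ * Real.pi / 2 := by
    have hc : ContinuousAt (fun w => |Complex.arg w|) z :=
      (continuousAt_arg_of_mem hγ2 hz).abs
    exact hc.eventually_lt continuousAt_const hz.2.1
  have h3 : ∀ᶠ w : ℂ in 𝓝 z, (‖w‖₊ : ℝ≥0∞) < r := by
    have hc : ContinuousAt (fun w : ℂ => (‖w‖₊ : ℝ≥0∞)) z :=
      (ENNReal.continuous_coe.comp continuous_nnnorm).continuousAt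
    exact hc.eventually_lt continuousAt_const hz.2.2
  filter_upwards [h1, h2, h3] with w hw1 hw2 hw3
  exact ⟨hw1, hw2, hw3⟩

lemma smul_mem_sector {z : ℂ} (hz : z ∈ Sector γ r) {t : ℝ} (ht0 : 0 < t) (ht1 : t ≤ 1) :
    (t : ℂ) * z ∈ Sector γ r := by
  refine ⟨?_, ?_, ?_⟩
  · simp only [ne_eq, mul_eq_zero, Complex.ofReal_eq_zero, not_or]
    exact ⟨ht0.ne', hz.1⟩
  · rw [Complex.arg_real_mul z ht0]; exact hz.2.1
  · refine lt_of_le_of_lt ?_ hz.2.2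
    rw [ENNReal.coe_le_coe]
    have : ‖(t:ℂ) * z‖ ≤ ‖z‖ := by
      rw [norm_mul, Complex.norm_real]
      calc ‖t‖ * ‖z‖ ≤ 1 * ‖z‖ := by
            apply mul_le_mul_of_nonneg_right _ (norm_nonneg z)
            rw [Real.norm_eq_abs, abs_of_pos ht0]; exact ht1
        _ = ‖z‖ := one_mul _
    exact this

lemma real_mem_sector (hγ0 : 0 < γ) {t : ℝ} (ht0 : 0 < t) (htr : (ENNReal.ofReal t) < r) :
    (t : ℂ) ∈ Sector γ r := by
  refine ⟨by exact_mod_cast ht0.ne', ?_, ?_⟩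
  · rw [Complex.arg_ofReal_of_nonneg ht0.le]
    simp only [abs_zero]
    positivity
  · have : (‖(t:ℂ)‖₊ : ℝ≥0∞) = ENNReal.ofReal t := by
      rw [← enorm_eq_nnnorm, ← ofReal_norm, Complex.norm_real, Real.norm_eq_abs, abs_of_pos ht0]
    rw [this]; exact htr

lemma circle_mem_sector (hγ2 : γ < 2) {z : ℂ} (hz : z ∈ Sector γ r) {s : ℝ}
    (hs : |s| ≤ |Complex.arg z|) :
    (↑(‖z‖) * Complex.exp (↑s * I)) ∈ Sector γ r := by
  have habs : ‖(↑‖z‖ * Complex.exp (↑s * I))‖ = ‖z‖ := by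
    rw [norm_mul, Complex.norm_exp_ofReal_mul_I, mul_one, Complex.norm_real, Real.norm_eq_abs,
      abs_of_pos (norm_pos_iff.mpr hz.1)]
  have hargz : |Complex.arg z| < Real.pi := arg_lt_pi_of_mem hγ2 hz
  have hsIoc : s ∈ Set.Ioc (-Real.pi) Real.pi := by
    constructor
    · nlinarith [abs_le.1 (hs.trans hargz.le), neg_abs_le s]
    · nlinarith [abs_le.1 (hs.trans hargz.le)]
  have harg : Complex.arg (↑(‖z‖) * Complex.exp (↑s * I)) = s := by
    rw [Complex.exp_mul_I, Complex.arg_real_mul _ (norm_pos_iff.mpr hz.1),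
      Complex.arg_cos_add_sin_mul_I hsIoc]
  refine ⟨?_, ?_, ?_⟩
  · intro hcon
    rw [hcon] at habs; simp at habs
    exact hz.1 (norm_eq_zero.1 habs.symm)
  · rw [harg]; exact lt_of_le_of_lt hs hz.2.1
  · have : ‖↑(‖z‖) * Complex.exp (↑s * I)‖₊ = ‖z‖₊ := by
      have := habs
      apply NNReal.coe_injective
      simpa using this
    rw [this]; exact hz.2.2

lemma norm_lt_of_mem (hrt : r ≠ ⊤) {z : ℂ} (hz : z ∈ Sector γ r) : ‖z‖ < r.toReal := by
  have := hz.2.2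
  have h2 : ((‖z‖₊ : ℝ≥0∞)).toReal < r.toReal := ENNReal.toReal_strict_mono hrt this
  simpa using h2

lemma mem_sector_ofReal_iff {ρ : ℝ} {z : ℂ} :
    z ∈ Sector γ (ENNReal.ofReal ρ) ↔ (z ≠ 0 ∧ |Complex.arg z| < γ * Real.pi / 2 ∧ ‖z‖ < ρ) := by
  constructor
  · rintro ⟨h1, h2, h3⟩
    refine ⟨h1, h2, ?_⟩
    rw [ENNReal.lt_ofReal_iff_toReal_lt coe_ne_top] at h3
    simpa using h3
  · rintro ⟨h1, h2, h3⟩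
    refine ⟨h1, h2, ?_⟩
    rw [ENNReal.lt_ofReal_iff_toReal_lt coe_ne_top]
    simpa using h3

end FRB

namespace FRB

variable {M : ℕ → ℝ}

lemma mg_exists (hM : StronglyRegular M) :
    ∃ A : ℝ, 1 ≤ A ∧ ∀ j k : ℕ, M (j+k) ≤ A ^ (j+k) * (M j * M k) := by
  obtain ⟨hpos, hone, hmono, hlc, ⟨A₀, hA₀⟩, _⟩ := hM
  refine ⟨max A₀ 1, le_max_right _ _, ?_⟩
  intro j k
  rcases Nat.eq_zero_or_pos (j + k) with hjk | hjk
  · have hj : j = 0 := by omega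
    have hk : k = 0 := by omega
    subst hj; subst hk
    simp [hone]
  · have h1 := hA₀ j k hjk
    have h2 : (M (j+k) / (M j * M k)) ^ ((1:ℝ)/((j:ℝ)+(k:ℝ))) ≤ max A₀ 1 :=
      h1.trans (le_max_left _ _)
    have hx : (0:ℝ) < M (j+k) / (M j * M k) := by
      apply div_pos (hpos _) (mul_pos (hpos _) (hpos _))
    have hn : (0:ℝ) < (j:ℝ) + (k:ℝ) := by
      have : (1:ℝ) ≤ (j:ℝ) + (k:ℝ) := by exact_mod_cast hjk
      linarith
    -- from x^(1/n) ≤ A we get x ≤ A^n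
    have hA1 : (1:ℝ) ≤ max A₀ 1 := le_max_right _ _
    have h3 : M (j+k) / (M j * M k) ≤ (max A₀ 1) ^ (((j:ℝ)+(k:ℝ))) := by
      have h4 := Real.rpow_le_rpow (Real.rpow_nonneg hx.le _) h2 hn.le
      rw [← Real.rpow_mul hx.le, one_div, inv_mul_cancel₀ hn.ne', Real.rpow_one] at h4
      exact h4
    have h5 : ((max A₀ 1) : ℝ) ^ (((j:ℝ)+(k:ℝ))) = (max A₀ 1) ^ (j + k) := by
      rw [← Real.rpow_natCast (max A₀ 1) (j+k)]
      push_cast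
      ring_nf
    rw [h5] at h3
    rw [div_le_iff₀ (mul_pos (hpos _) (hpos _))] at h3
    linarith [h3]
end FRB

namespace FRB2
variable {M : ℕ → ℝ}

lemma ratio_mono (hM : StronglyRegular M) : Monotone (fun j => M (j+1) / M j) := by
  obtain ⟨hpos, hone, hmono, hlc, _, _⟩ := hM
  apply monotone_nat_of_le_succ
  intro j
  rw [div_le_div_iff₀ (hpos _) (hpos _)]
  have := hlc j
  nlinarith [hpos j, hpos (j+1), hpos (j+2)]

lemma supermult (hM : StronglyRegular M) (a b : ℕ) : M a * M b ≤ M (a + b) := by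
  have hpos := hM.1
  induction a with
  | zero => simp [hM.2.1]
  | succ a ih =>
    have hr : M (a+1) / M a ≤ M (a+b+1) / M (a+b) := ratio_mono hM (by omega : a ≤ a + b)
    have hMa := hpos a
    have hMab := hpos (a+b)
    have h1 : M (a+1) * M b = (M (a+1) / M a) * (M a * M b) := by
      field_simp
    rw [show a + 1 + b = a + b + 1 by omega, h1]
    calc (M (a+1) / M a) * (M a * M b) ≤ (M (a+1) / M a) * M (a+b) := by
          apply mul_le_mul_of_nonneg_left ih
          have := hpos (a+1)
          positivity
      _ ≤ (M (a+b+1) / M (a+b)) * M (a+b) := by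
          apply mul_le_mul_of_nonneg_right hr
          positivity
      _ = M (a+b+1) := by field_simp

lemma iter_mg (hM : StronglyRegular M) {A : ℝ} (hA1 : 1 ≤ A)
    (hA : ∀ j k : ℕ, M (j+k) ≤ A ^ (j+k) * (M j * M k)) (m l : ℕ) :
    M (m * l) ≤ A ^ (m * m * l) * (M l) ^ m := by
  have hpos := hM.1
  induction m with
  | zero => simp [hM.2.1]
  | succ m ih =>
    have h1 : (m+1) * l = m * l + l := by ring
    have h2 : M (m*l + l) ≤ A ^ (m*l+l) * (M (m*l) * M l) := hA (m*l) l
    have hMl := hpos l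
    have h3 : A ^ (m*l+l) * (M (m*l) * M l) ≤ A ^ (m*l+l) * ((A ^ (m*m*l) * (M l)^m) * M l) := by
      have hAp : (0:ℝ) ≤ A ^ (m*l+l) := by positivity
      apply mul_le_mul_of_nonneg_left _ hAp
      apply mul_le_mul_of_nonneg_right ih hMl.le
    have h4 : A ^ (m*l+l) * ((A ^ (m*m*l) * (M l)^m) * M l) = A ^ (m*l+l+m*m*l) * (M l)^(m+1) := by
      rw [pow_add, pow_add]; ring
    have h5 : A ^ (m*l+l+m*m*l) ≤ A ^ ((m+1)*(m+1)*l) := by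
      apply pow_le_pow_right₀ hA1
      nlinarith
    have h6 : A ^ (m*l+l+m*m*l) * (M l)^(m+1) ≤ A ^ ((m+1)*(m+1)*l) * (M l)^(m+1) := by
      have : (0:ℝ) ≤ (M l)^(m+1) := by positivity
      apply mul_le_mul_of_nonneg_right h5 this
    rw [h1]
    exact h2.trans (h3.trans (h4 ▸ h6))

lemma hFun_eq {t : ℝ} (ht : t ≠ 0) : hFun M t = ⨅ j : ℕ, t ^ j * M j := by
  simp [hFun, ht]

lemma hFun_bdd (hM : StronglyRegular M) {t : ℝ} (ht : 0 < t) :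
    BddBelow (Set.range fun j : ℕ => t ^ j * M j) := by
  refine ⟨0, ?_⟩
  rintro x ⟨j, rfl⟩
  have := hM.1 j
  positivity

lemma hFun_le_term (hM : StronglyRegular M) {t : ℝ} (ht : 0 < t) (j : ℕ) :
    hFun M t ≤ t ^ j * M j := by
  rw [hFun_eq ht.ne']
  exact ciInf_le (hFun_bdd hM ht) j

lemma le_hFun (hM : StronglyRegular M) {t c : ℝ} (ht : 0 < t)
    (h : ∀ j : ℕ, c ≤ t ^ j * M j) : c ≤ hFun M t := by
  rw [hFun_eq ht.ne']
  exact le_ciInf h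

lemma hFun_nonneg (hM : StronglyRegular M) {t : ℝ} (ht : 0 ≤ t) : 0 ≤ hFun M t := by
  rcases eq_or_lt_of_le ht with h | h
  · simp [hFun, ← h]
  · apply le_hFun hM h
    intro j
    have := hM.1 j
    positivity

lemma hFun_mono (hM : StronglyRegular M) {s t : ℝ} (hs : 0 < s) (hst : s ≤ t) :
    hFun M s ≤ hFun M t := by
  apply le_hFun hM (lt_of_lt_of_le hs hst)
  intro j
  calc hFun M s ≤ s ^ j * M j := hFun_le_term hM hs j
    _ ≤ t ^ j * M j := by
        apply mul_le_mul_of_nonneg_right (pow_le_pow_left₀ hs.le hst j) (hM.1 j).le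

lemma hFun_div_pow (hM : StronglyRegular M) {A : ℝ} (hA1 : 1 ≤ A)
    (hA : ∀ j k : ℕ, M (j+k) ≤ A ^ (j+k) * (M j * M k)) {s : ℝ} (hs : 0 < s) (k : ℕ) :
    hFun M s ≤ (A ^ k * M k * s ^ k) * hFun M (A * s) := by
  have hA0 : (0:ℝ) < A := lt_of_lt_of_le one_pos hA1
  have hAs : 0 < A * s := by positivity
  have hMk := hM.1 k
  have hc : 0 < A ^ k * M k * s ^ k := by positivity
  rw [← div_le_iff₀' hc]
  apply le_hFun hM hAs
  intro l
  rw [div_le_iff₀' hc]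
  calc hFun M s ≤ s ^ (k + l) * M (k + l) := hFun_le_term hM hs (k+l)
    _ ≤ s ^ (k+l) * (A ^ (k+l) * (M k * M l)) := by
        have h0 : (0:ℝ) ≤ s ^ (k+l) := by positivity
        apply mul_le_mul_of_nonneg_left (hA k l) h0
    _ = A ^ k * M k * s ^ k * ((A*s) ^ l * M l) := by
        rw [pow_add, pow_add, mul_pow]; ring

lemma hFun_root (hM : StronglyRegular M) {A : ℝ} (hA1 : 1 ≤ A)
    (hA : ∀ j k : ℕ, M (j+k) ≤ A ^ (j+k) * (M j * M k)) {m : ℕ} (hm : 1 ≤ m)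
    {t x C : ℝ} (ht : 0 < t) (hx : 0 ≤ x) (hle : x ^ m ≤ C * hFun M t) :
    x ≤ (max 1 C) * hFun M (A ^ m * t) := by
  have hA0 : (0:ℝ) < A := lt_of_lt_of_le one_pos hA1
  have hAt : 0 < A ^ m * t := by positivity
  have hC1 : (0:ℝ) < max 1 C := lt_of_lt_of_le one_pos (le_max_left _ _)
  by_cases hC : 0 ≤ C
  · rw [← div_le_iff₀' hC1]
    apply le_hFun hM hAt
    intro l
    rw [div_le_iff₀' hC1]
    have hMl := hM.1 l
    have hyl : (0:ℝ) ≤ (A ^ m * t) ^ l * M l := by positivity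
    have h1 : x ^ m ≤ C * (((A ^ m * t) ^ l * M l) ^ m) := by
      calc x ^ m ≤ C * hFun M t := hle
        _ ≤ C * (t ^ (m*l) * M (m*l)) :=
            mul_le_mul_of_nonneg_left (hFun_le_term hM ht (m*l)) hC
        _ ≤ C * (t ^ (m*l) * (A ^ (m*m*l) * (M l)^m)) := by
            apply mul_le_mul_of_nonneg_left _ hC
            have h0 : (0:ℝ) ≤ t ^ (m*l) := by positivity
            apply mul_le_mul_of_nonneg_left (iter_mg hM hA1 hA m l) h0
        _ = C * (((A ^ m * t) ^ l * M l) ^ m) := by ring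
    have h2 : x ^ m ≤ ((max 1 C) * ((A ^ m * t) ^ l * M l)) ^ m := by
      refine h1.trans ?_
      conv_rhs => rw [mul_pow]
      have hylm : (0:ℝ) ≤ ((A ^ m * t) ^ l * M l) ^ m := by positivity
      apply mul_le_mul_of_nonneg_right _ hylm
      calc C ≤ max 1 C := le_max_right _ _
        _ ≤ (max 1 C) ^ m := le_self_pow₀ (le_max_left _ _) (by omega)
    exact le_of_pow_le_pow_left₀ (by omega) (by positivity) h2
  · push_neg at hC
    have h0 : x ^ m ≤ 0 := by
      refine hle.trans ?_
      apply mul_nonpos_of_nonpos_of_nonneg hC.le (hFun_nonneg hM ht.le)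
    have hx0 : x = 0 := by
      have : x ^ m = 0 := le_antisymm h0 (by positivity)
      exact pow_eq_zero_iff (by omega) |>.1 this
    rw [hx0]
    have := hFun_nonneg hM hAt.le
    positivity

end FRB2

namespace FRB3

variable {U : Set ℂ} {f g : ℂ → ℂ}

lemma analyticOnNhd_iteratedDeriv (hf : AnalyticOnNhd ℂ f U) (n : ℕ) :
    AnalyticOnNhd ℂ (iteratedDeriv n f) U := by
  induction n with
  | zero => simpa using hf
  | succ n ih => rw [iteratedDeriv_succ]; exact ih.deriv

lemma eqOn_iteratedDeriv (hU : IsOpen U) (h : Set.EqOn f g U) (n : ℕ) :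
    Set.EqOn (iteratedDeriv n f) (iteratedDeriv n g) U := by
  induction n with
  | zero => simpa using h
  | succ n ih =>
    intro z hz
    rw [iteratedDeriv_succ, iteratedDeriv_succ]
    apply Filter.EventuallyEq.deriv_eq
    filter_upwards [hU.mem_nhds hz] with w hw
    exact ih hw

lemma norm_iteratedDeriv_mul_le (hU : IsOpen U) (hf : AnalyticOnNhd ℂ f U)
    (hg : AnalyticOnNhd ℂ g U) {z : ℂ} (hz : z ∈ U) (n : ℕ) :
    ‖iteratedDeriv n (fun w => f w * g w) z‖ ≤
      ∑ i ∈ Finset.range (n + 1), (n.choose i : ℝ) * ‖iteratedDeriv i f z‖ *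
        ‖iteratedDeriv (n - i) g z‖ := by
  have hfc : ContDiffOn ℂ (⊤ : WithTop ℕ∞) f U := hf.contDiffOn hU.uniqueDiffOn
  have hgc : ContDiffOn ℂ (⊤ : WithTop ℕ∞) g U := hg.contDiffOn hU.uniqueDiffOn
  have key := norm_iteratedFDerivWithin_mul_le hfc hgc hU.uniqueDiffOn hz
    (le_top : (n : WithTop ℕ∞) ≤ ⊤)
  calc ‖iteratedDeriv n (fun w => f w * g w) z‖
      = ‖iteratedFDerivWithin ℂ n (fun w => f w * g w) U z‖ := by
        rw [iteratedFDerivWithin_of_isOpen n hU hz, norm_iteratedFDeriv_eq_norm_iteratedDeriv]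
    _ ≤ ∑ i ∈ Finset.range (n + 1), (n.choose i : ℝ) * ‖iteratedFDerivWithin ℂ i f U z‖ *
        ‖iteratedFDerivWithin ℂ (n - i) g U z‖ := key
    _ = ∑ i ∈ Finset.range (n + 1), (n.choose i : ℝ) * ‖iteratedDeriv i f z‖ *
        ‖iteratedDeriv (n - i) g z‖ := by
        apply Finset.sum_congr rfl
        intro i _
        rw [iteratedFDerivWithin_of_isOpen i hU hz, iteratedFDerivWithin_of_isOpen (n-i) hU hz,
          norm_iteratedFDeriv_eq_norm_iteratedDeriv, norm_iteratedFDeriv_eq_norm_iteratedDeriv]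

/-- Product of a "flat" function and one with bounded iterated derivatives is flat. -/
lemma tendsto_iteratedDeriv_mul (hU : IsOpen U) (hf : AnalyticOnNhd ℂ f U)
    (hg : AnalyticOnNhd ℂ g U) {l : Filter ℂ} (hl : l ≤ Filter.principal U)
    (hflat : ∀ k, Tendsto (iteratedDeriv k f) l (𝓝 0))
    (hbd : ∀ k, ∃ B : ℝ, ∀ z ∈ U, ‖iteratedDeriv k g z‖ ≤ B) (n : ℕ) :
    Tendsto (iteratedDeriv n (fun w => f w * g w)) l (𝓝 0) := by
  rw [tendsto_zero_iff_norm_tendsto_zero]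
  choose B hB using hbd
  have hub : ∀ᶠ z in l, ‖iteratedDeriv n (fun w => f w * g w) z‖ ≤
      ∑ i ∈ Finset.range (n + 1), (n.choose i : ℝ) * ‖iteratedDeriv i f z‖ * B (n - i) := by
    filter_upwards [hl (Filter.mem_principal_self U)] with z hz
    refine (norm_iteratedDeriv_mul_le hU hf hg hz n).trans ?_
    apply Finset.sum_le_sum
    intro i _
    have h1 : (0:ℝ) ≤ (n.choose i : ℝ) * ‖iteratedDeriv i f z‖ := by positivity
    have h2 := hB (n - i) z hz
    exact mul_le_mul_of_nonneg_left h2 h1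
  have hlow : ∀ᶠ z in l, (0:ℝ) ≤ ‖iteratedDeriv n (fun w => f w * g w) z‖ :=
    Filter.Eventually.of_forall (fun z => norm_nonneg _)
  have hsum : Tendsto (fun z => ∑ i ∈ Finset.range (n + 1),
      (n.choose i : ℝ) * ‖iteratedDeriv i f z‖ * B (n - i)) l (𝓝 0) := by
    have : ∀ i ∈ Finset.range (n+1), Tendsto
        (fun z => (n.choose i : ℝ) * ‖iteratedDeriv i f z‖ * B (n - i)) l (𝓝 0) := by
      intro i _
      have h1 : Tendsto (fun z => ‖iteratedDeriv i f z‖) l (𝓝 0) := by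
        rw [← tendsto_zero_iff_norm_tendsto_zero]
        exact hflat i
      have h2 := (h1.const_mul ((n.choose i : ℝ))).mul_const (B (n-i))
      simpa using h2
    have := tendsto_finset_sum (Finset.range (n+1)) this
    simpa using this
  exact squeeze_zero' hlow hub hsum

lemma iteratedDeriv_add_on (hU : IsOpen U) (hf : AnalyticOnNhd ℂ f U)
    (hg : AnalyticOnNhd ℂ g U) (n : ℕ) {z : ℂ} (hz : z ∈ U) :
    iteratedDeriv n (fun w => f w + g w) z = iteratedDeriv n f z + iteratedDeriv n g z := by
  induction n generalizing z with
  | zero => simp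
  | succ n ih =>
    rw [iteratedDeriv_succ, iteratedDeriv_succ, iteratedDeriv_succ]
    have he : (iteratedDeriv n fun w => f w + g w) =ᶠ[𝓝 z]
        (fun w => iteratedDeriv n f w + iteratedDeriv n g w) := by
      filter_upwards [hU.mem_nhds hz] with w hw
      exact ih hw
    rw [he.deriv_eq]
    apply deriv_add
    · exact ((analyticOnNhd_iteratedDeriv hf n) z hz).differentiableAt
    · exact ((analyticOnNhd_iteratedDeriv hg n) z hz).differentiableAt

lemma iteratedDeriv_sub_on (hU : IsOpen U) (hf : AnalyticOnNhd ℂ f U)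
    (hg : AnalyticOnNhd ℂ g U) (n : ℕ) {z : ℂ} (hz : z ∈ U) :
    iteratedDeriv n (fun w => f w - g w) z = iteratedDeriv n f z - iteratedDeriv n g z := by
  induction n generalizing z with
  | zero => simp
  | succ n ih =>
    rw [iteratedDeriv_succ, iteratedDeriv_succ, iteratedDeriv_succ]
    have he : (iteratedDeriv n fun w => f w - g w) =ᶠ[𝓝 z]
        (fun w => iteratedDeriv n f w - iteratedDeriv n g w) := by
      filter_upwards [hU.mem_nhds hz] with w hw
      exact ih hw
    rw [he.deriv_eq]
    apply deriv_sub
    · exact ((analyticOnNhd_iteratedDeriv hf n) z hz).differentiableAt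
    · exact ((analyticOnNhd_iteratedDeriv hg n) z hz).differentiableAt

end FRB3

namespace FRB4

variable {U : Set ℂ} {g f : ℂ → ℂ}

lemma curve_tendsto {z : ℂ} (hstar : ∀ t : ℝ, 0 < t → t ≤ 1 → (t:ℂ) * z ∈ U) :
    Tendsto (fun t : ℝ => (t:ℂ) * z) (𝓝[>] (0:ℝ)) (𝓝[U] 0) := by
  rw [tendsto_nhdsWithin_iff]
  constructor
  · have hc : Continuous (fun t : ℝ => (t:ℂ) * z) := (Complex.continuous_ofReal.mul continuous_const : Continuous fun t : ℝ => (t:ℂ) * z)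
    have := hc.tendsto 0
    simp only [Complex.ofReal_zero, zero_mul] at this
    exact this.mono_left nhdsWithin_le_nhds
  · have h1 : ∀ᶠ t : ℝ in 𝓝[>] (0:ℝ), t ≤ 1 := by
      apply eventually_nhdsWithin_of_eventually_nhds
      filter_upwards [Metric.ball_mem_nhds (0:ℝ) one_pos] with t ht
      rw [Real.ball_eq_Ioo] at ht
      simp at ht
      linarith [ht.2]
    have h2 : ∀ᶠ t : ℝ in 𝓝[>] (0:ℝ), 0 < t := eventually_mem_nhdsWithin
    filter_upwards [h1, h2] with t h1 h2
    exact hstar t h2 h1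

lemma hasDerivAt_comp_ray (hU : IsOpen U) (hg : AnalyticOnNhd ℂ g U) {z : ℂ} {t : ℝ}
    (hmem : (t:ℂ) * z ∈ U) :
    HasDerivAt (fun s : ℝ => g ((s:ℂ) * z)) (deriv g ((t:ℂ) * z) * z) t := by
  have hinner : HasDerivAt (fun w : ℂ => w * z) z (t:ℂ) := by
    simpa using (hasDerivAt_id ((t:ℝ):ℂ)).mul_const z
  have houter : HasDerivAt g (deriv g ((t:ℂ) * z)) ((t:ℂ) * z) :=
    ((hg _ hmem).differentiableAt).hasDerivAt
  have hcomp := HasDerivAt.comp (t:ℂ) houter hinner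
  have := hcomp.comp_ofReal
  simpa [Function.comp] using this

lemma radial_step (hU : IsOpen U) (hg : AnalyticOnNhd ℂ g U) {z : ℂ}
    (hstar : ∀ t : ℝ, 0 < t → t ≤ 1 → (t:ℂ) * z ∈ U) (hz1 : ((1:ℝ):ℂ) * z ∈ U)
    (hlim : Tendsto (fun t : ℝ => g ((t:ℂ) * z)) (𝓝[>] (0:ℝ)) (𝓝 0))
    {c : ℝ} {q : ℕ} (hc : 0 ≤ c)
    (hd : ∀ t : ℝ, 0 < t → t ≤ 1 → ‖deriv g ((t:ℂ) * z)‖ ≤ c * (t * ‖z‖) ^ q) :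
    ‖g z‖ ≤ c * ‖z‖ ^ (q+1) / (q+1) := by
  set ψ : ℝ → ℂ := fun t => g ((t:ℂ) * z) with hψ
  have key : ∀ ε : ℝ, 0 < ε → ε ≤ 1 → ‖ψ 1‖ ≤ ‖ψ ε‖ + c * ‖z‖ ^ (q+1) / (q+1) := by
    intro ε hε0 hε1
    have hderiv : ∀ x ∈ Set.uIcc ε 1, HasDerivAt ψ (deriv g ((x:ℂ) * z) * z) x := by
      intro x hx
      rw [Set.uIcc_of_le hε1] at hx
      exact hasDerivAt_comp_ray hU hg (hstar x (lt_of_lt_of_le hε0 hx.1) hx.2)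
    have hcont : ContinuousOn (fun x : ℝ => deriv g ((x:ℂ) * z) * z) (Set.uIcc ε 1) := by
      apply ContinuousOn.mul _ continuousOn_const
      apply ContinuousOn.comp (hg.deriv.differentiableOn.continuousOn)
      · exact ((Complex.continuous_ofReal.mul continuous_const : Continuous fun t : ℝ => (t:ℂ) * z)).continuousOn
      · intro x hx
        rw [Set.uIcc_of_le hε1] at hx
        exact hstar x (lt_of_lt_of_le hε0 hx.1) hx.2
    have hint : IntervalIntegrable (fun x : ℝ => deriv g ((x:ℂ) * z) * z)
        MeasureTheory.volume ε 1 := hcont.intervalIntegrable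
    have heq := intervalIntegral.integral_eq_sub_of_hasDerivAt hderiv hint
    have hbound : ‖∫ x in ε..1, deriv g ((x:ℂ) * z) * z‖ ≤
        |∫ x in ε..1, c * ‖z‖ ^ (q+1) * x ^ q| := by
      apply intervalIntegral.norm_integral_le_abs_of_norm_le
      · apply MeasureTheory.ae_restrict_of_forall_mem measurableSet_uIoc
        intro x hx
        rw [Set.uIoc_of_le hε1] at hx
        have hx0 : 0 < x := lt_trans hε0 hx.1
        have := hd x hx0 hx.2
        calc ‖deriv g ((x:ℂ) * z) * z‖ = ‖deriv g ((x:ℂ) * z)‖ * ‖z‖ := norm_mul _ _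
          _ ≤ c * (x * ‖z‖) ^ q * ‖z‖ :=
              mul_le_mul_of_nonneg_right this (norm_nonneg z)
          _ = c * ‖z‖ ^ (q+1) * x ^ q := by rw [mul_pow, pow_succ]; ring
      · apply ContinuousOn.intervalIntegrable
        apply ContinuousOn.mul continuousOn_const
        exact (continuous_pow q).continuousOn
    have hcomp : |∫ x in ε..1, c * ‖z‖ ^ (q+1) * x ^ q| ≤ c * ‖z‖ ^ (q+1) / (q+1) := by
      rw [intervalIntegral.integral_const_mul, integral_pow, abs_mul]
      have h1 : |c * ‖z‖ ^ (q+1)| = c * ‖z‖ ^ (q+1) := by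
        apply _root_.abs_of_nonneg; positivity
      rw [h1]
      have hεp : (0:ℝ) ≤ ε^(q+1) := by positivity
      have hεp1 : ε^(q+1) ≤ 1 := pow_le_one₀ hε0.le hε1
      have h2 : |(1 ^ (q + 1) - ε ^ (q + 1)) / ((q:ℝ) + 1)| ≤ 1 / ((q:ℝ)+1) := by
        rw [one_pow, abs_div, _root_.abs_of_nonneg (by linarith : (0:ℝ) ≤ 1 - ε^(q+1)),
          _root_.abs_of_nonneg (by positivity : (0:ℝ) ≤ (q:ℝ)+1)]
        gcongr
        · linarith
      calc c * ‖z‖ ^ (q+1) * |(1 ^ (q + 1) - ε ^ (q + 1)) / ((q:ℝ) + 1)|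
          ≤ c * ‖z‖ ^ (q+1) * (1 / ((q:ℝ)+1)) := by
            apply mul_le_mul_of_nonneg_left h2 (by positivity)
        _ = c * ‖z‖ ^ (q+1) / ((q:ℝ)+1) := by ring
      -- note: the goal's (q+1) denominator is the ℕ-cast of q+1
    have hfin : ‖ψ 1‖ ≤ ‖ψ ε‖ + c * ‖z‖ ^ (q+1) / (q+1) := by
      have h3 : ‖ψ 1‖ - ‖ψ ε‖ ≤ ‖ψ 1 - ψ ε‖ := norm_sub_norm_le _ _
      rw [← heq] at h3
      have h4 := hbound.trans hcomp
      have : ((q:ℝ) + 1) = ((q+1 : ℕ) : ℝ) := by push_cast; ring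
      rw [this] at h4
      linarith
    exact hfin
  have hgz : ‖g z‖ = ‖ψ 1‖ := by simp [hψ]
  rw [hgz]
  apply _root_.le_of_forall_pos_le_add
  intro δ hδ
  have hev1 : ∀ᶠ t in 𝓝[>] (0:ℝ), ‖ψ t‖ < δ := by
    have := hlim (Metric.ball_mem_nhds (0:ℂ) hδ)
    filter_upwards [this] with t ht
    simpa [dist_eq_norm] using ht
  have hev2 : ∀ᶠ t in 𝓝[>] (0:ℝ), 0 < t := eventually_mem_nhdsWithin
  have hev3 : ∀ᶠ t in 𝓝[>] (0:ℝ), t ≤ 1 := by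
    apply eventually_nhdsWithin_of_eventually_nhds
    filter_upwards [Metric.ball_mem_nhds (0:ℝ) one_pos] with t ht
    rw [Real.ball_eq_Ioo] at ht
    simp at ht
    linarith [ht.2]
  obtain ⟨ε, h1, h2, h3⟩ := (hev1.and (hev2.and hev3)).exists
  have := key ε h2 h3
  linarith

/-- If all derivatives of order `< n` tend to `0` at the vertex and the `n`-th is bounded
by `B`, then `‖f z‖ ≤ B ‖z‖^n / n!` on a star-shaped (w.r.t. radial scaling) open set. -/
lemma flat_taylor (hU : IsOpen U) (hf : AnalyticOnNhd ℂ f U)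
    (hstar : ∀ z ∈ U, ∀ t : ℝ, 0 < t → t ≤ 1 → (t:ℂ) * z ∈ U)
    {n : ℕ} {B : ℝ} (hB0 : 0 ≤ B)
    (hflat : ∀ p < n, Tendsto (iteratedDeriv p f) (𝓝[U] 0) (𝓝 0))
    (hB : ∀ z ∈ U, ‖iteratedDeriv n f z‖ ≤ B) :
    ∀ z ∈ U, ‖f z‖ ≤ B * ‖z‖ ^ n / (n.factorial : ℝ) := by
  have main : ∀ m, m ≤ n → ∀ z ∈ U,
      ‖iteratedDeriv (n - m) f z‖ ≤ B * ‖z‖ ^ m / (m.factorial : ℝ) := by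
    intro m
    induction m with
    | zero =>
      intro _ z hz
      simpa using hB z hz
    | succ m ih =>
      intro hm1 z hz
      have hmn : m ≤ n := by omega
      have hidx : n - m = (n - (m + 1)) + 1 := by omega
      have hlt : n - (m + 1) < n := by omega
      set g := iteratedDeriv (n - (m+1)) f with hg
      have hga : AnalyticOnNhd ℂ g U := by
        rw [hg]
        exact FRB3.analyticOnNhd_iteratedDeriv hf _
      have hderiv_eq : deriv g = iteratedDeriv (n - m) f := by
        rw [hg, ← iteratedDeriv_succ, ← hidx]
      have hlimg : Tendsto (fun t : ℝ => g ((t:ℂ) * z)) (𝓝[>] (0:ℝ)) (𝓝 0) := by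
        have h1 := hflat (n - (m+1)) hlt
        exact h1.comp (curve_tendsto (fun t ht0 ht1 => hstar z hz t ht0 ht1))
      have hd : ∀ t : ℝ, 0 < t → t ≤ 1 →
          ‖deriv g ((t:ℂ) * z)‖ ≤ (B / (m.factorial : ℝ)) * (t * ‖z‖) ^ m := by
        intro t ht0 ht1
        rw [hderiv_eq]
        have hmem := hstar z hz t ht0 ht1
        have := ih hmn _ hmem
        have hnorm : ‖(t:ℂ) * z‖ = t * ‖z‖ := by
          rw [norm_mul, Complex.norm_real, Real.norm_eq_abs, abs_of_pos ht0]
        rw [hnorm] at this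
        calc ‖iteratedDeriv (n - m) f ((t:ℂ) * z)‖ ≤ B * (t * ‖z‖) ^ m / (m.factorial : ℝ) :=
              this
          _ = (B / (m.factorial : ℝ)) * (t * ‖z‖) ^ m := by ring
      have hc0 : (0:ℝ) ≤ B / (m.factorial : ℝ) := by positivity
      have hz1 : ((1:ℝ):ℂ) * z ∈ U := by
        simpa using hz
      have := radial_step hU hga (fun t ht0 ht1 => hstar z hz t ht0 ht1) hz1 hlimg hc0 hd
      calc ‖iteratedDeriv (n - (m+1)) f z‖ ≤
            (B / (m.factorial : ℝ)) * ‖z‖ ^ (m+1) / ((m:ℝ)+1) := this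
        _ = B * ‖z‖ ^ (m+1) / ((m+1).factorial : ℝ) := by
            rw [div_mul_eq_mul_div, div_div, Nat.factorial_succ]
            congr 1
            push_cast
            ring
  intro z hz
  have := main n le_rfl z hz
  simpa using this

end FRB4

namespace FRB5
open Set Filter Topology Complex ENNReal
variable {γ : ℝ} {r : ℝ≥0∞} {f : ℂ → ℂ} {B : ℝ}

lemma exists_rho (hr0 : 0 < r) : ∃ ρ : ℝ, 0 < ρ ∧ ENNReal.ofReal ρ < r := by
  rcases eq_or_ne r ⊤ with hr | hr
  · exact ⟨1, one_pos, by simp [hr]⟩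
  · have h1 : 0 < r.toReal := ENNReal.toReal_pos hr0.ne' hr
    refine ⟨r.toReal / 2, by linarith, ?_⟩
    have h2 : ENNReal.ofReal (r.toReal / 2) < ENNReal.ofReal r.toReal := by
      rw [ENNReal.ofReal_lt_ofReal_iff h1]
      linarith
    rwa [ENNReal.ofReal_toReal hr] at h2

lemma real_abs_mem_sector (hγ0 : 0 < γ) {z : ℂ} (hz : z ∈ Sector γ r) :
    (‖z‖ : ℂ) ∈ Sector γ r := by
  apply FRB.real_mem_sector hγ0 (norm_pos_iff.mpr hz.1)
  have : ENNReal.ofReal (‖z‖) = (‖z‖₊ : ℝ≥0∞) := by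
    rw [ofReal_norm, enorm_eq_nnnorm]
  rw [this]
  exact hz.2.2

lemma arc_estimate (hγ0 : 0 < γ) (hγ2 : γ < 2) (hf : AnalyticOnNhd ℂ f (Sector γ r))
    (hB : ∀ w ∈ Sector γ r, ‖deriv f w‖ ≤ B) {z : ℂ} (hz : z ∈ Sector γ r) :
    ‖f z - f (‖z‖ : ℂ)‖ ≤ B * Real.pi * ‖z‖ := by
  have hB0 : 0 ≤ B := le_trans (norm_nonneg _) (hB z hz)
  set c : ℂ := (Complex.arg z : ℂ) * I with hc
  set u : ℝ → ℂ := fun τ => (‖z‖ : ℂ) * Complex.exp ((τ:ℂ) * c) with hu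
  have humem : ∀ τ : ℝ, τ ∈ Set.Icc (0:ℝ) 1 → u τ ∈ Sector γ r := by
    intro τ hτ
    have : (τ:ℂ) * c = ((τ * Complex.arg z : ℝ) : ℂ) * I := by
      rw [hc]; push_cast; ring
    rw [hu]
    simp only
    rw [this]
    apply FRB.circle_mem_sector hγ2 hz
    rw [abs_mul]
    calc |τ| * |Complex.arg z| ≤ 1 * |Complex.arg z| := by
          apply mul_le_mul_of_nonneg_right _ (abs_nonneg _)
          rw [_root_.abs_of_nonneg hτ.1]; exact hτ.2
      _ = |Complex.arg z| := one_mul _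
  have hderiv : ∀ τ : ℝ, τ ∈ Set.Icc (0:ℝ) 1 →
      HasDerivWithinAt (fun s : ℝ => f (u s))
        (deriv f (u τ) * ((‖z‖ : ℂ) * c * Complex.exp ((τ:ℂ) * c)))
        (Set.Icc (0:ℝ) 1) τ := by
    intro τ hτ
    have hinner : HasDerivAt (fun w : ℂ => (‖z‖ : ℂ) * Complex.exp (w * c))
        ((‖z‖ : ℂ) * (c * Complex.exp ((τ:ℂ) * c))) (τ:ℂ) := by
      have h1 : HasDerivAt (fun w : ℂ => w * c) c (τ:ℂ) := by
        simpa using (hasDerivAt_id ((τ:ℝ):ℂ)).mul_const c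
      have h2 : HasDerivAt (fun w : ℂ => Complex.exp (w * c))
          (Complex.exp ((τ:ℂ) * c) * c) (τ:ℂ) := by
        exact (Complex.hasDerivAt_exp ((τ:ℂ) * c)).comp (τ:ℂ) h1
      have h3 := h2.const_mul ((‖z‖ : ℂ) : ℂ)
      rw [mul_comm c]
      exact h3
    have houter : HasDerivAt f (deriv f (u τ))
        ((‖z‖ : ℂ) * Complex.exp ((τ:ℂ) * c)) :=
      ((hf _ (humem τ hτ)).differentiableAt).hasDerivAt
    have hcomp := (houter.comp ((τ:ℝ):ℂ) hinner).comp_ofReal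
    have hval : deriv f (u τ) * ((‖z‖ : ℂ) * c * Complex.exp ((τ:ℂ) * c))
        = deriv f (u τ) * ((‖z‖ : ℂ) * (c * Complex.exp ((τ:ℂ) * c))) := by ring
    rw [hval]
    exact hcomp.hasDerivWithinAt
  have hbound : ∀ τ : ℝ, τ ∈ Set.Icc (0:ℝ) 1 →
      ‖deriv f (u τ) * ((‖z‖ : ℂ) * c * Complex.exp ((τ:ℂ) * c))‖ ≤
        B * Real.pi * ‖z‖ := by
    intro τ hτ
    rw [norm_mul]
    have h1 : ‖deriv f (u τ)‖ ≤ B := hB _ (humem τ hτ)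
    have h2 : ‖(‖z‖ : ℂ) * c * Complex.exp ((τ:ℂ) * c)‖ ≤ ‖z‖ * Real.pi := by
      rw [norm_mul, norm_mul]
      have ha : ‖(‖z‖ : ℂ)‖ = ‖z‖ := by
        rw [Complex.norm_real, Real.norm_eq_abs, _root_.abs_of_nonneg (norm_nonneg z)]
      have hb : ‖c‖ ≤ Real.pi := by
        rw [hc, norm_mul, Complex.norm_real, Complex.norm_I, mul_one, Real.norm_eq_abs]
        exact (FRB.arg_lt_pi_of_mem hγ2 hz).le
      have hcexp : ‖Complex.exp ((τ:ℂ) * c)‖ = 1 := by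
        have : (τ:ℂ) * c = ((τ * Complex.arg z : ℝ) : ℂ) * I := by rw [hc]; push_cast; ring
        rw [this, Complex.norm_exp_ofReal_mul_I]
      rw [ha, hcexp, mul_one]
      exact mul_le_mul_of_nonneg_left hb (norm_nonneg z)
    calc ‖deriv f (u τ)‖ * ‖(‖z‖ : ℂ) * c * Complex.exp ((τ:ℂ) * c)‖
        ≤ B * (‖z‖ * Real.pi) := by
          apply mul_le_mul h1 h2 (norm_nonneg _) hB0
      _ = B * Real.pi * ‖z‖ := by ring
  have := Convex.norm_image_sub_le_of_norm_hasDerivWithin_le hderiv hbound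
    (convex_Icc (0:ℝ) 1) (Set.left_mem_Icc.2 zero_le_one) (Set.right_mem_Icc.2 zero_le_one)
  have hu1 : u 1 = z := by
    rw [hu]; simp only [Complex.ofReal_one, one_mul, hc]
    exact Complex.norm_mul_exp_arg_mul_I z
  have hu0 : u 0 = (‖z‖ : ℂ) := by
    rw [hu]; simp
  rw [hu1, hu0] at this
  simpa using this

lemma radial_estimate (hγ0 : 0 < γ) {s s' : ℝ} (hs : 0 < s) (hss : s ≤ s')
    (hs' : ENNReal.ofReal s' < r) (hf : AnalyticOnNhd ℂ f (Sector γ r))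
    (hB : ∀ w ∈ Sector γ r, ‖deriv f w‖ ≤ B) :
    ‖f (s' : ℂ) - f (s : ℂ)‖ ≤ B * (s' - s) := by
  set u : ℝ → ℂ := fun τ => (s:ℂ) + (τ:ℂ) * ((s' - s : ℝ):ℂ) with hu
  have hueq : ∀ τ : ℝ, u τ = ((s + τ * (s' - s) : ℝ) : ℂ) := by
    intro τ; rw [hu]; push_cast; ring
  have hmem : ∀ τ : ℝ, τ ∈ Set.Icc (0:ℝ) 1 → u τ ∈ Sector γ r := by
    intro τ hτ
    rw [hueq]
    apply FRB.real_mem_sector hγ0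
    · nlinarith [hτ.1, hτ.2]
    · apply lt_of_le_of_lt _ hs'
      apply ENNReal.ofReal_le_ofReal
      nlinarith [hτ.1, hτ.2]
  have hB0 : 0 ≤ B := by
    have h0 : u 0 ∈ Sector γ r := hmem 0 (Set.left_mem_Icc.2 zero_le_one)
    exact le_trans (norm_nonneg _) (hB _ h0)
  have hderiv : ∀ τ : ℝ, τ ∈ Set.Icc (0:ℝ) 1 →
      HasDerivWithinAt (fun τ : ℝ => f (u τ))
        (deriv f (u τ) * ((s' - s : ℝ) : ℂ)) (Set.Icc (0:ℝ) 1) τ := by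
    intro τ hτ
    have hinner : HasDerivAt (fun w : ℂ => (s:ℂ) + w * ((s' - s : ℝ):ℂ)) ((s' - s : ℝ):ℂ)
        (τ:ℂ) := by
      simpa using ((hasDerivAt_id ((τ:ℝ):ℂ)).mul_const ((s' - s : ℝ):ℂ)).const_add (s:ℂ)
    have houter : HasDerivAt f (deriv f (u τ)) ((s:ℂ) + (τ:ℂ) * ((s' - s : ℝ):ℂ)) :=
      ((hf _ (hmem τ hτ)).differentiableAt).hasDerivAt
    have hcomp := (houter.comp ((τ:ℝ):ℂ) hinner).comp_ofReal
    exact hcomp.hasDerivWithinAt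
  have hbound : ∀ τ : ℝ, τ ∈ Set.Icc (0:ℝ) 1 →
      ‖deriv f (u τ) * ((s' - s : ℝ) : ℂ)‖ ≤ B * (s' - s) := by
    intro τ hτ
    rw [norm_mul]
    have h1 : ‖deriv f (u τ)‖ ≤ B := hB _ (hmem τ hτ)
    have h2 : ‖((s' - s : ℝ) : ℂ)‖ = s' - s := by
      rw [Complex.norm_real, Real.norm_eq_abs, _root_.abs_of_nonneg (by linarith)]
    rw [h2]
    exact mul_le_mul_of_nonneg_right h1 (by linarith)
  have := Convex.norm_image_sub_le_of_norm_hasDerivWithin_le hderiv hbound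
    (convex_Icc (0:ℝ) 1) (Set.left_mem_Icc.2 zero_le_one) (Set.right_mem_Icc.2 zero_le_one)
  have hu1 : u 1 = (s' : ℂ) := by rw [hu]; push_cast; ring_nf
  have hu0 : u 0 = (s : ℂ) := by rw [hu]; push_cast; ring_nf
  rw [hu1, hu0] at this
  simpa using this

lemma pair_estimate (hγ0 : 0 < γ) (hγ2 : γ < 2) (hf : AnalyticOnNhd ℂ f (Sector γ r))
    (hB : ∀ w ∈ Sector γ r, ‖deriv f w‖ ≤ B) {z w : ℂ}
    (hz : z ∈ Sector γ r) (hw : w ∈ Sector γ r) :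
    ‖f z - f w‖ ≤ B * (Real.pi + 1) * (‖z‖ + ‖w‖) := by
  have hB0 : 0 ≤ B := le_trans (norm_nonneg _) (hB z hz)
  have h1 := arc_estimate hγ0 hγ2 hf hB hz
  have h2 := arc_estimate hγ0 hγ2 hf hB hw
  have hmid : ‖f (‖z‖ : ℂ) - f (‖w‖ : ℂ)‖ ≤
      B * (‖z‖ + ‖w‖) := by
    rcases le_total (‖w‖) (‖z‖) with hcase | hcase
    · have := radial_estimate hγ0 (norm_pos_iff.mpr hw.1) hcase
        (by rw [ofReal_norm]; exact hz.2.2) hf hB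
      refine this.trans ?_
      have := norm_nonneg w
      nlinarith [norm_nonneg z]
    · have := radial_estimate hγ0 (norm_pos_iff.mpr hz.1) hcase
        (by rw [ofReal_norm]; exact hw.2.2) hf hB
      rw [norm_sub_rev] at this
      refine this.trans ?_
      have := norm_nonneg z
      nlinarith [norm_nonneg w]
  calc ‖f z - f w‖ ≤ ‖f z - f (‖z‖ : ℂ)‖ +
        ‖f (‖z‖ : ℂ) - f (‖w‖ : ℂ)‖ +
        ‖f (‖w‖ : ℂ) - f w‖ := by
        have := norm_sub_le_norm_sub_add_norm_sub (f z) (f (‖z‖ : ℂ)) (f w)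
        have h4 := norm_sub_le_norm_sub_add_norm_sub
          (f (‖z‖ : ℂ)) (f (‖w‖ : ℂ)) (f w)
        linarith
    _ ≤ B * Real.pi * ‖z‖ + B * (‖z‖ + ‖w‖) + B * Real.pi * ‖w‖ := by
        rw [norm_sub_rev] at h2
        linarith
    _ ≤ B * (Real.pi + 1) * (‖z‖ + ‖w‖) := by nlinarith [norm_nonneg z, norm_nonneg w]

lemma exists_vertex_limit (hγ0 : 0 < γ) (hγ2 : γ < 2) (hr0 : 0 < r)
    (hf : AnalyticOnNhd ℂ f (Sector γ r))
    (hB : ∀ w ∈ Sector γ r, ‖deriv f w‖ ≤ B) :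
    ∃ α : ℂ, Tendsto f (𝓝[Sector γ r] 0) (𝓝 α) ∧
      ∀ z ∈ Sector γ r, ‖f z - α‖ ≤ B * (Real.pi + 1) * ‖z‖ := by
  obtain ⟨ρ, hρ0, hρr⟩ := exists_rho hr0
  set x : ℕ → ℝ := fun n => ρ / (n + 1) with hx
  have hxmem : ∀ n : ℕ, ((x n : ℝ) : ℂ) ∈ Sector γ r := by
    intro n
    apply FRB.real_mem_sector hγ0
    · rw [hx]; positivity
    · apply lt_of_le_of_lt _ hρr
      apply ENNReal.ofReal_le_ofReal
      rw [hx]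
      rw [div_le_iff₀ (by positivity : (0:ℝ) < (n:ℝ)+1)]
      nlinarith [Nat.cast_nonneg (α := ℝ) n]
  have hxnorm : ∀ n : ℕ, ‖((x n : ℝ) : ℂ)‖ = x n := by
    intro n
    rw [Complex.norm_real, Real.norm_eq_abs, _root_.abs_of_pos (by rw [hx]; positivity)]
  have hB0 : 0 ≤ B := le_trans (norm_nonneg _) (hB _ (hxmem 0))
  set u : ℕ → ℂ := fun n => f ((x n : ℝ) : ℂ) with hu
  have hcauchy : CauchySeq u := by
    refine cauchySeq_of_le_tendsto_0 (fun N => B * (Real.pi + 1) * (2 * ρ / (N + 1)))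
      (fun n m N hn hm => ?_) ?_
    · 
      rw [dist_eq_norm]
      have := pair_estimate hγ0 hγ2 hf hB (hxmem n) (hxmem m)
      rw [hxnorm, hxnorm] at this
      refine this.trans ?_
      have hxn : x n ≤ ρ / (N + 1) := by
        rw [hx]
        apply div_le_div_of_nonneg_left hρ0.le (by positivity)
        have : (N:ℝ) ≤ n := by exact_mod_cast hn
        linarith
      have hxm : x m ≤ ρ / (N + 1) := by
        rw [hx]
        apply div_le_div_of_nonneg_left hρ0.le (by positivity)
        have : (N:ℝ) ≤ m := by exact_mod_cast hm
        linarith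
      have hπ : (0:ℝ) ≤ B * (Real.pi + 1) := by positivity
      have h5 : x n + x m ≤ 2 * ρ / ((N:ℝ)+1) := by
        have heq : ρ / ((N:ℝ)+1) + ρ / ((N:ℝ)+1) = 2*ρ/((N:ℝ)+1) := by ring
        linarith
      exact mul_le_mul_of_nonneg_left h5 hπ
    · have h6 : Tendsto (fun N : ℕ => ((N:ℝ) + 1)) atTop atTop := by
        apply tendsto_atTop_add_const_right
        exact tendsto_natCast_atTop_atTop
      have := Tendsto.div_atTop (tendsto_const_nhds (x := B * (Real.pi + 1) * (2 * ρ))) h6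
      simpa [mul_div_assoc] using this
  obtain ⟨α, hα⟩ := cauchySeq_tendsto_of_complete hcauchy
  refine ⟨α, ?_, ?_⟩
  case refine_2 =>
    intro z hz
    have hbd : ∀ n : ℕ, ‖f z - u n‖ ≤ B * (Real.pi + 1) * (‖z‖ + x n) := by
      intro n
      have := pair_estimate hγ0 hγ2 hf hB hz (hxmem n)
      rwa [hxnorm] at this
    have hlim1 : Tendsto (fun n : ℕ => ‖f z - u n‖) atTop (𝓝 ‖f z - α‖) :=
      (Tendsto.const_sub (f z) hα).norm
    have hlim2 : Tendsto (fun n : ℕ => B * (Real.pi + 1) * (‖z‖ + x n)) atTop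
        (𝓝 (B * (Real.pi + 1) * (‖z‖ + 0))) := by
      apply Filter.Tendsto.const_mul
      apply Tendsto.const_add
      rw [hx]
      have h6 : Tendsto (fun N : ℕ => ((N:ℝ) + 1)) atTop atTop := by
        apply tendsto_atTop_add_const_right
        exact tendsto_natCast_atTop_atTop
      exact Tendsto.div_atTop (tendsto_const_nhds (x := ρ)) h6
    have := le_of_tendsto_of_tendsto' hlim1 hlim2 hbd
    simpa using this
  case refine_1 =>
    rw [tendsto_iff_norm_sub_tendsto_zero]
    have hup : ∀ z ∈ Sector γ r, ‖f z - α‖ ≤ B * (Real.pi + 1) * ‖z‖ := by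
      intro z hz
      have hbd : ∀ n : ℕ, ‖f z - u n‖ ≤ B * (Real.pi + 1) * (‖z‖ + x n) := by
        intro n
        have := pair_estimate hγ0 hγ2 hf hB hz (hxmem n)
        rwa [hxnorm] at this
      have hlim1 : Tendsto (fun n : ℕ => ‖f z - u n‖) atTop (𝓝 ‖f z - α‖) :=
        (Tendsto.const_sub (f z) hα).norm
      have hlim2 : Tendsto (fun n : ℕ => B * (Real.pi + 1) * (‖z‖ + x n)) atTop
          (𝓝 (B * (Real.pi + 1) * (‖z‖ + 0))) := by
        apply Filter.Tendsto.const_mul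
        apply Tendsto.const_add
        rw [hx]
        have h6 : Tendsto (fun N : ℕ => ((N:ℝ) + 1)) atTop atTop := by
          apply tendsto_atTop_add_const_right
          exact tendsto_natCast_atTop_atTop
        exact Tendsto.div_atTop (tendsto_const_nhds (x := ρ)) h6
      have := le_of_tendsto_of_tendsto' hlim1 hlim2 hbd
      simpa using this
    apply squeeze_zero' (Filter.Eventually.of_forall (fun z => norm_nonneg _))
    · exact eventually_nhdsWithin_of_forall hup
    · have hcont : Tendsto (fun z : ℂ => B * (Real.pi + 1) * ‖z‖) (𝓝[Sector γ r] 0)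
          (𝓝 (B * (Real.pi + 1) * ‖(0:ℂ)‖)) := by
        apply Filter.Tendsto.const_mul
        exact (continuous_norm.tendsto _).mono_left nhdsWithin_le_nhds
      simpa using hcont

end FRB5

namespace FRB6
open Set Filter Topology Complex ENNReal
variable {γ : ℝ} {r : ℝ≥0∞} {f a : ℂ → ℂ} {B : ℝ} {M : ℕ → ℝ}

lemma iteratedDeriv_monomial (k p : ℕ) (co : ℂ) :
    iteratedDeriv p (fun z : ℂ => co * z ^ k) =
      fun z => co * (k.descFactorial p : ℂ) * z ^ (k - p) := by
  induction p with
  | zero => simp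
  | succ p ih =>
    rw [iteratedDeriv_succ, ih]
    funext z
    have hd : HasDerivAt (fun w : ℂ => co * (k.descFactorial p : ℂ) * w ^ (k - p))
        (co * (k.descFactorial p : ℂ) * ((k - p : ℕ) * z ^ (k - p - 1))) z := by
      simpa using (hasDerivAt_pow (k - p) z).const_mul (co * (k.descFactorial p : ℂ))
    rw [hd.deriv]
    rw [Nat.descFactorial_succ]
    have : k - (p+1) = (k - p) - 1 := by omega
    rw [this]
    push_cast
    ring

lemma sector_star {z : ℂ} (hz : z ∈ Sector γ r) : ∀ t : ℝ, 0 < t → t ≤ 1 →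
    (t:ℂ) * z ∈ Sector γ r := fun t ht0 ht1 => FRB.smul_mem_sector hz ht0 ht1

/-- Flat Taylor estimate specialized to sectors. -/
lemma sector_flat_taylor (hγ2 : γ < 2) (hf : AnalyticOnNhd ℂ f (Sector γ r))
    {n : ℕ} {B : ℝ} (hB0 : 0 ≤ B)
    (hflat : ∀ p < n, Tendsto (iteratedDeriv p f) (𝓝[Sector γ r] 0) (𝓝 0))
    (hB : ∀ z ∈ Sector γ r, ‖iteratedDeriv n f z‖ ≤ B) :
    ∀ z ∈ Sector γ r, ‖f z‖ ≤ B * ‖z‖ ^ n / (n.factorial : ℝ) :=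
  FRB4.flat_taylor (FRB.isOpen_sector hγ2) hf (fun z hz t ht0 ht1 => sector_star hz t ht0 ht1)
    hB0 hflat hB

/-- A function all of whose derivatives tend to `0` at the vertex, and which lies in the
`M`-class, is bounded by `C · h_M(σ‖z‖)`. -/
lemma flat_hFun_bound (hγ2 : γ < 2) (hM : StronglyRegular M)
    (hf : AnalyticOnNhd ℂ f (Sector γ r))
    (hflat : ∀ j, Tendsto (iteratedDeriv j f) (𝓝[Sector γ r] 0) (𝓝 0))
    {C σ : ℝ} (hC : 0 < C) (hσ : 0 < σ)
    (hbd : ∀ j : ℕ, ∀ z ∈ Sector γ r, ‖iteratedDeriv j f z‖ ≤ C * σ ^ j * (j.factorial : ℝ) * M j) :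
    ∀ z ∈ Sector γ r, ‖f z‖ ≤ C * hFun M (σ * ‖z‖) := by
  intro z hz
  have hz0 : (0:ℝ) < ‖z‖ := by
    simp only [norm_pos_iff]
    exact hz.1
  have hσz : 0 < σ * ‖z‖ := by positivity
  rw [← div_le_iff₀' hC]
  apply FRB2.le_hFun hM hσz
  intro j
  rw [div_le_iff₀' hC]
  have hBj : (0:ℝ) ≤ C * σ ^ j * (j.factorial : ℝ) * M j := by
    have := hM.1 j
    positivity
  have := sector_flat_taylor hγ2 hf hBj (fun p _ => hflat p) (hbd j) z hz
  refine this.trans ?_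
  have hfac : ((j.factorial : ℝ)) ≠ 0 := by positivity
  rw [mul_pow]
  rw [div_le_iff₀ (by positivity : (0:ℝ) < (j.factorial : ℝ))] at *
  calc C * σ ^ j * (j.factorial : ℝ) * M j * ‖z‖ ^ j
      = C * (σ ^ j * ‖z‖ ^ j * M j) * (j.factorial : ℝ) := by ring
    _ ≤ C * (σ ^ j * ‖z‖ ^ j * M j) * (j.factorial : ℝ) := le_rfl

lemma nonflat_lower (hγ0 : 0 < γ) (hγ2 : γ < 2) (hr0 : 0 < r)
    (ha : AnalyticOnNhd ℂ a (Sector γ r)) {k : ℕ} {α : ℂ} (hαne : α ≠ 0)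
    (hlow : ∀ p < k, Tendsto (iteratedDeriv p a) (𝓝[Sector γ r] 0) (𝓝 0))
    (hk : Tendsto (iteratedDeriv k a) (𝓝[Sector γ r] 0) (𝓝 α))
    (hB : ∀ z ∈ Sector γ r, ‖iteratedDeriv (k+1) a z‖ ≤ B) :
    ∃ ρ₁ : ℝ, 0 < ρ₁ ∧ ∀ z ∈ Sector γ r, ‖z‖ ≤ ρ₁ →
      ‖α‖ / (2 * (k.factorial : ℝ)) * ‖z‖ ^ k ≤ ‖a z‖ := by
  have hUopen : IsOpen (Sector γ r) := FRB.isOpen_sector hγ2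
  set co : ℂ := α / (k.factorial : ℂ) with hco
  set q : ℂ → ℂ := fun z => co * z ^ k with hq
  have hqa : AnalyticOnNhd ℂ q (Sector γ r) := by
    rw [hq]
    apply AnalyticOnNhd.mul analyticOnNhd_const
    exact (analyticOnNhd_id).pow k
  set E : ℂ → ℂ := fun z => a z - q z with hE
  have hEa : AnalyticOnNhd ℂ E (Sector γ r) := ha.sub hqa
  have hEid : ∀ p : ℕ, ∀ z ∈ Sector γ r, iteratedDeriv p E z =
      iteratedDeriv p a z - co * (k.descFactorial p : ℂ) * z ^ (k - p) := by
    intro p z hz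
    rw [hE]
    rw [FRB3.iteratedDeriv_sub_on hUopen ha hqa p hz]
    rw [hq, iteratedDeriv_monomial]
  -- flatness of E up to order k
  have hEflat : ∀ p < k + 1, Tendsto (iteratedDeriv p E) (𝓝[Sector γ r] 0) (𝓝 0) := by
    intro p hp
    have hcongr : ∀ᶠ z in 𝓝[Sector γ r] (0:ℂ), iteratedDeriv p E z =
        iteratedDeriv p a z - co * (k.descFactorial p : ℂ) * z ^ (k - p) := by
      filter_upwards [self_mem_nhdsWithin] with z hz
      exact hEid p z hz
    rw [tendsto_congr' hcongr]
    rcases Nat.lt_or_ge p k with hpk | hpk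
    · -- p < k : both terms tend to 0
      have h1 := hlow p hpk
      have h2 : Tendsto (fun z : ℂ => co * (k.descFactorial p : ℂ) * z ^ (k - p))
          (𝓝[Sector γ r] 0) (𝓝 0) := by
        have hcont : Continuous (fun z : ℂ => co * (k.descFactorial p : ℂ) * z ^ (k - p)) := by
          continuity
        have := (hcont.tendsto 0).mono_left (nhdsWithin_le_nhds (s := Sector γ r))
        have hval : co * (k.descFactorial p : ℂ) * (0:ℂ) ^ (k - p) = 0 := by
          rw [zero_pow (by omega : k - p ≠ 0)]
          ring
        rwa [hval] at this
      simpa using h1.sub h2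
    · -- p = k
      have hpk' : p = k := by omega
      subst hpk'
      have h2 : (fun z : ℂ => iteratedDeriv p a z - co * (p.descFactorial p : ℂ) * z ^ (p - p))
          = fun z => iteratedDeriv p a z - α := by
        funext z
        rw [Nat.descFactorial_self, Nat.sub_self, pow_zero, mul_one, hco]
        congr 1
        rw [div_mul_cancel₀]
        exact_mod_cast (Nat.factorial_pos p).ne'
      rw [h2]
      simpa using hk.sub (tendsto_const_nhds (x := α))
  -- bound on the (k+1)-st derivative of E
  have hB0 : 0 ≤ B := by
    obtain ⟨ρ, hρ0, hρr⟩ := FRB5.exists_rho hr0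
    have hmem : ((ρ : ℝ) : ℂ) ∈ Sector γ r := FRB.real_mem_sector hγ0 hρ0 hρr
    exact le_trans (norm_nonneg _) (hB _ hmem)
  have hEbd : ∀ z ∈ Sector γ r, ‖iteratedDeriv (k+1) E z‖ ≤ B := by
    intro z hz
    rw [hEid (k+1) z hz]
    have : (k.descFactorial (k+1) : ℂ) = 0 := by
      norm_cast
      exact Nat.descFactorial_eq_zero_iff_lt.2 (by omega)
    rw [this]
    simpa using hB z hz
  have hEsmall := sector_flat_taylor hγ2 hEa hB0 hEflat hEbd
  -- choose the radius
  have hα0 : 0 < ‖α‖ := norm_pos_iff.2 hαne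
  have hfk : (0:ℝ) < (k.factorial : ℝ) := by positivity
  have hfk1 : (0:ℝ) < ((k+1).factorial : ℝ) := by positivity
  refine ⟨‖α‖ * ((k+1).factorial : ℝ) / (2 * (k.factorial : ℝ) * (B + 1)), by positivity, ?_⟩
  intro z hz hzρ
  have hEz := hEsmall z hz
  have hqz : ‖q z‖ = ‖α‖ / (k.factorial : ℝ) * ‖z‖ ^ k := by
    rw [hq, hco]
    simp only [norm_mul, norm_div, norm_pow]
    rw [Complex.norm_natCast]
  have htri : ‖q z‖ - ‖E z‖ ≤ ‖a z‖ := by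
    have h3 : q z = a z - E z := by rw [hE]; ring
    have h4 : ‖q z‖ ≤ ‖a z‖ + ‖E z‖ := by rw [h3]; exact norm_sub_le _ _
    linarith
  have hzk : (0:ℝ) ≤ ‖z‖ ^ k := by positivity
  have h6 : B * ‖z‖ ^ (k+1) / ((k+1).factorial : ℝ) ≤ ‖α‖ / (2 * (k.factorial : ℝ)) * ‖z‖ ^ k := by
    rw [pow_succ]
    have h7 : B * (‖z‖ ^ k * ‖z‖) ≤ B * (‖z‖ ^ k * (‖α‖ * ((k+1).factorial : ℝ) /
        (2 * (k.factorial : ℝ) * (B + 1)))) := by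
      apply mul_le_mul_of_nonneg_left _ hB0
      exact mul_le_mul_of_nonneg_left hzρ hzk
    have h8 : B * (‖z‖ ^ k * (‖α‖ * ((k+1).factorial : ℝ) / (2 * (k.factorial : ℝ) * (B + 1)))) /
        ((k+1).factorial : ℝ) ≤ ‖α‖ / (2 * (k.factorial : ℝ)) * ‖z‖ ^ k := by
      rw [div_le_iff₀ hfk1]
      have hB1 : (0:ℝ) < B + 1 := by linarith
      have expand : ‖α‖ / (2 * (k.factorial : ℝ)) * ‖z‖ ^ k * ((k+1).factorial : ℝ) -
          B * (‖z‖ ^ k * (‖α‖ * ((k+1).factorial : ℝ) / (2 * (k.factorial : ℝ) * (B + 1)))) =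
          ‖z‖ ^ k * ‖α‖ * ((k+1).factorial : ℝ) / (2 * (k.factorial : ℝ) * (B + 1)) := by
        field_simp
        ring
      nlinarith [mul_nonneg (mul_nonneg hzk hα0.le) hfk1.le,
        div_nonneg (mul_nonneg (mul_nonneg hzk hα0.le) hfk1.le)
          (by positivity : (0:ℝ) ≤ 2 * (k.factorial : ℝ) * (B + 1))]
    calc B * (‖z‖ ^ k * ‖z‖) / ((k+1).factorial : ℝ)
        ≤ B * (‖z‖ ^ k * (‖α‖ * ((k+1).factorial : ℝ) / (2 * (k.factorial : ℝ) * (B + 1)))) /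
          ((k+1).factorial : ℝ) := by
          exact div_le_div_of_nonneg_right h7 hfk1.le
      _ ≤ ‖α‖ / (2 * (k.factorial : ℝ)) * ‖z‖ ^ k := h8
  have h9 : ‖α‖ / (k.factorial : ℝ) * ‖z‖ ^ k - ‖α‖ / (2 * (k.factorial : ℝ)) * ‖z‖ ^ k =
      ‖α‖ / (2 * (k.factorial : ℝ)) * ‖z‖ ^ k := by
    field_simp
    ring
  rw [hqz] at htri
  linarith

end FRB6

namespace FRB7
open Set Filter Topology Complex ENNReal

/-- `f` is analytic with all iterated derivatives bounded on `U`. -/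
def GoodOn (U : Set ℂ) (f : ℂ → ℂ) : Prop :=
  AnalyticOnNhd ℂ f U ∧ ∀ j : ℕ, ∃ B : ℝ, 0 ≤ B ∧ ∀ z ∈ U, ‖iteratedDeriv j f z‖ ≤ B

variable {U : Set ℂ} {f g : ℂ → ℂ}

lemma iteratedDeriv_zero_fun (n : ℕ) : iteratedDeriv n (fun _ : ℂ => (0:ℂ)) = fun _ => 0 := by
  induction n with
  | zero => simp
  | succ n ih =>
    rw [iteratedDeriv_succ, ih]
    funext z
    exact deriv_const z 0

lemma goodOn_const (c : ℂ) (hU : IsOpen U) : GoodOn U (fun _ => c) := by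
  refine ⟨analyticOnNhd_const, ?_⟩
  intro j
  rcases Nat.eq_zero_or_pos j with hj | hj
  · subst hj
    exact ⟨‖c‖, norm_nonneg c, fun z _ => by simp⟩
  · refine ⟨0, le_rfl, fun z _ => ?_⟩
    obtain ⟨j', rfl⟩ : ∃ j', j = j' + 1 := ⟨j - 1, by omega⟩
    rw [iteratedDeriv_succ']
    have : deriv (fun _ : ℂ => c) = fun _ : ℂ => (0:ℂ) := by
      funext w; exact deriv_const w c
    rw [this, iteratedDeriv_zero_fun]
    simp

lemma GoodOn.add (hU : IsOpen U) (hf : GoodOn U f) (hg : GoodOn U g) :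
    GoodOn U (fun z => f z + g z) := by
  refine ⟨hf.1.add hg.1, ?_⟩
  intro j
  obtain ⟨Bf, hBf0, hBf⟩ := hf.2 j
  obtain ⟨Bg, hBg0, hBg⟩ := hg.2 j
  refine ⟨Bf + Bg, by linarith, fun z hz => ?_⟩
  rw [FRB3.iteratedDeriv_add_on hU hf.1 hg.1 j hz]
  exact (norm_add_le _ _).trans (add_le_add (hBf z hz) (hBg z hz))

lemma GoodOn.mul (hU : IsOpen U) (hf : GoodOn U f) (hg : GoodOn U g) :
    GoodOn U (fun z => f z * g z) := by
  refine ⟨hf.1.mul hg.1, ?_⟩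
  intro n
  choose Bf hBf0 hBf using hf.2
  choose Bg hBg0 hBg using hg.2
  refine ⟨∑ i ∈ Finset.range (n+1), (n.choose i : ℝ) * Bf i * Bg (n - i), ?_, fun z hz => ?_⟩
  · apply Finset.sum_nonneg
    intro i _
    exact mul_nonneg (mul_nonneg (by positivity) (hBf0 i)) (hBg0 (n-i))
  · refine (FRB3.norm_iteratedDeriv_mul_le hU hf.1 hg.1 hz n).trans ?_
    apply Finset.sum_le_sum
    intro i _
    have h1 := hBf i z hz
    have h2 := hBg (n-i) z hz
    have c0 : (0:ℝ) ≤ (n.choose i : ℝ) := by positivity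
    calc (n.choose i : ℝ) * ‖iteratedDeriv i f z‖ * ‖iteratedDeriv (n - i) g z‖
        ≤ (n.choose i : ℝ) * Bf i * ‖iteratedDeriv (n - i) g z‖ := by
          apply mul_le_mul_of_nonneg_right _ (norm_nonneg _)
          exact mul_le_mul_of_nonneg_left h1 c0
      _ ≤ (n.choose i : ℝ) * Bf i * Bg (n - i) := by
          apply mul_le_mul_of_nonneg_left h2
          exact mul_nonneg (by positivity) (hBf0 i)

lemma GoodOn.pow (hU : IsOpen U) (hf : GoodOn U f) (k : ℕ) :
    GoodOn U (fun z => f z ^ k) := by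
  induction k with
  | zero =>
    have : (fun z : ℂ => f z ^ 0) = fun _ => (1:ℂ) := by funext z; simp
    rw [this]
    exact goodOn_const 1 hU
  | succ k ih =>
    have : (fun z : ℂ => f z ^ (k+1)) = fun z => f z ^ k * f z := by
      funext z; rw [pow_succ]
    rw [this]
    exact ih.mul hU hf

lemma GoodOn.sum (hU : IsOpen U) {ι : Type*} (s : Finset ι) (F : ι → ℂ → ℂ)
    (hF : ∀ i ∈ s, GoodOn U (F i)) : GoodOn U (fun z => ∑ i ∈ s, F i z) := by
  classical
  induction s using Finset.induction_on with
  | empty =>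
    have : (fun z : ℂ => ∑ i ∈ (∅ : Finset ι), F i z) = fun _ => (0:ℂ) := by
      funext z; simp
    rw [this]
    exact goodOn_const 0 hU
  | @insert x s' hx ih =>
    have : (fun z : ℂ => ∑ i ∈ insert x s', F i z) = fun z => F x z + ∑ i ∈ s', F i z := by
      funext z
      rw [Finset.sum_insert hx]
    rw [this]
    exact (hF x (Finset.mem_insert_self x s')).add hU
      (ih (fun i hi => hF i (Finset.mem_insert_of_mem hi)))

/-- Curious fix for `GoodOn.mul` argument order. -/
lemma GoodOn.mul' (hU : IsOpen U) (hf : GoodOn U f) (hg : GoodOn U g) :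
    GoodOn U (fun z => f z * g z) := hf.mul hU hg

/-- flatness is preserved by multiplication with a `GoodOn` function. -/
lemma flat_mul (hU : IsOpen U) (hf : GoodOn U f) (hg : GoodOn U g)
    (hflat : ∀ k, Tendsto (iteratedDeriv k f) (𝓝[U] 0) (𝓝 0)) (n : ℕ) :
    Tendsto (iteratedDeriv n (fun z => f z * g z)) (𝓝[U] 0) (𝓝 0) := by
  apply FRB3.tendsto_iteratedDeriv_mul hU hf.1 hg.1 _ hflat
    (fun k => (hg.2 k).imp (fun B hB => hB.2)) n
  exact le_principal_iff.2 self_mem_nhdsWithin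

end FRB7

set_option maxHeartbeats 1000000 in
/-- A flat root `h ∈ A^∞(S_{γ,r})` of a monic polynomial with coefficients in
`A_M(S_{γ,r})` satisfies `|h(z)| ≤ c₁·h_M(c₂·|z|)` on some smaller sector. -/
theorem flat_root_bound
    (γ : ℝ) (hγ0 : 0 < γ) (hγ2 : γ < 2)
    (r : ℝ≥0∞) (hr0 : 0 < r) (hrt : r < ⊤)
    (M : ℕ → ℝ) (hM : StronglyRegular M)
    (d : ℕ) (hd : 1 ≤ d) (a : Fin d → ℂ → ℂ) (ha : ∀ i, AClass M γ r (a i))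
    (h : ℂ → ℂ) (hh : AInfty γ r h) (hflat : FlatOn γ r h)
    (heq : ∀ z ∈ Sector γ r,
      h z ^ d + ∑ i : Fin d, a i z * h z ^ (d - 1 - (i : ℕ)) = 0) :
    ∃ r'' : ℝ≥0∞, 0 < r'' ∧ r'' ≤ r ∧ ∃ c₁ > (0:ℝ), ∃ c₂ > (0:ℝ),
      ∀ z ∈ Sector γ r'', ‖h z‖ ≤ c₁ * hFun M (c₂ * ‖z‖) := by
  classical
  set S : Set ℂ := Sector γ r with hS
  have hSopen : IsOpen S := FRB.isOpen_sector hγ2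
  have hhA : AnalyticOnNhd ℂ h S := hh.1.analyticOnNhd hSopen
  -- ℕ-indexed coefficients
  set aa : ℕ → ℂ → ℂ := fun i => if hi : i < d then a ⟨i, hi⟩ else fun _ => 0 with haa
  have haa_lt : ∀ i (hi : i < d), aa i = a ⟨i, hi⟩ := fun i hi => dif_pos hi
  have haaA : ∀ i, AnalyticOnNhd ℂ (aa i) S := by
    intro i
    by_cases hi : i < d
    · rw [haa_lt i hi]; exact ((ha ⟨i, hi⟩).1.1).analyticOnNhd hSopen
    · rw [haa]; simp only [dif_neg hi]; exact analyticOnNhd_const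
  have haaG : ∀ i, FRB7.GoodOn S (aa i) := by
    intro i
    by_cases hi : i < d
    · refine ⟨haaA i, ?_⟩
      intro j
      obtain ⟨B, hB⟩ := (ha ⟨i, hi⟩).1.2 j
      refine ⟨max B 0, le_max_right _ _, fun z hz => ?_⟩
      rw [haa_lt i hi]
      exact (hB z hz).trans (le_max_left _ _)
    · rw [haa]; simp only [dif_neg hi]; exact FRB7.goodOn_const 0 hSopen
  have hhG : FRB7.GoodOn S h := by
    refine ⟨hhA, fun j => ?_⟩
    obtain ⟨B, hB⟩ := hh.2 j
    exact ⟨max B 0, le_max_right _ _, fun z hz => (hB z hz).trans (le_max_left _ _)⟩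
  -- the tail polynomials
  set G : ℕ → ℂ → ℂ :=
    fun m z => h z ^ (d - m) + ∑ i ∈ Finset.range (d - m), aa i z * h z ^ (d - 1 - m - i)
    with hGdef
  have hGapp : ∀ m z, G m z =
      h z ^ (d - m) + ∑ i ∈ Finset.range (d - m), aa i z * h z ^ (d - 1 - m - i) :=
    fun m z => by rw [hGdef]
  have hGgood : ∀ m, FRB7.GoodOn S (G m) := by
    intro m
    rw [hGdef]
    apply FRB7.GoodOn.add hSopen (hhG.pow hSopen (d - m))
    apply FRB7.GoodOn.sum hSopen
    intro i _
    exact (haaG i).mul hSopen (hhG.pow hSopen _)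
  have hGanalytic : ∀ m, AnalyticOnNhd ℂ (G m) S := fun m => (hGgood m).1
  -- `G 0` vanishes on the sector
  have hG0 : ∀ z ∈ S, G 0 z = 0 := by
    intro z hz
    have h0 := heq z hz
    rw [hGapp]
    simp only [Nat.sub_zero]
    have hsum : ∑ i ∈ Finset.range d, aa i z * h z ^ (d - 1 - i) =
        ∑ i : Fin d, a i z * h z ^ (d - 1 - (i : ℕ)) := by
      rw [← Fin.sum_univ_eq_sum_range (fun i => aa i z * h z ^ (d - 1 - i)) d]
      apply Finset.sum_congr rfl
      intro i _
      rw [haa_lt i i.isLt]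
    rw [hsum]
    exact h0
  -- the recursion identity
  have hGrec : ∀ m, m < d → ∀ z ∈ S, G m z = aa (d - 1 - m) z + h z * G (m+1) z := by
    intro m hmd z _
    rw [hGapp, hGapp]
    have e1 : d - m = (d - m - 1) + 1 := by omega
    rw [e1, Finset.sum_range_succ, pow_succ]
    have e3 : d - 1 - m - (d - m - 1) = 0 := by omega
    have e4 : d - m - 1 = d - 1 - m := by omega
    have e5 : d - (m+1) = d - m - 1 := by omega
    rw [e3, pow_zero, mul_one, e5, mul_add, Finset.mul_sum]
    have hsum : ∑ i ∈ Finset.range (d - m - 1), aa i z * h z ^ (d - 1 - m - i) =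
        ∑ i ∈ Finset.range (d - m - 1), h z * (aa i z * h z ^ (d - 1 - (m+1) - i)) := by
      apply Finset.sum_congr rfl
      intro i hi
      rw [Finset.mem_range] at hi
      have : d - 1 - m - i = (d - 1 - (m+1) - i) + 1 := by omega
      rw [this, pow_succ]
      ring
    rw [hsum, e4]
    ring
  -- flatness of the last coefficient
  set Fl : ℕ → Prop :=
    fun i => ∀ j, Tendsto (iteratedDeriv j (aa i)) (𝓝[S] 0) (𝓝 0) with hFldef
  have hFl_last : Fl (d - 1) := by
    have hidd : Set.EqOn (aa (d-1)) (fun z => (fun _ : ℂ => (0:ℂ)) z - h z * G 1 z) S := by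
      intro z hz
      have h1 := hGrec 0 (by omega) z hz
      have h2 := hG0 z hz
      simp only [Nat.sub_zero] at h1
      simp only []
      rw [h2] at h1
      linear_combination -h1
    intro j
    have hprod : AnalyticOnNhd ℂ (fun z => h z * G 1 z) S := hhA.mul (hGanalytic 1)
    have hcongr : ∀ᶠ z in 𝓝[S] (0:ℂ), iteratedDeriv j (aa (d-1)) z =
        (0:ℂ) - iteratedDeriv j (fun z => h z * G 1 z) z := by
      filter_upwards [self_mem_nhdsWithin] with z hz
      rw [FRB3.eqOn_iteratedDeriv hSopen hidd j hz,
        FRB3.iteratedDeriv_sub_on hSopen analyticOnNhd_const hprod j hz,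
        FRB7.iteratedDeriv_zero_fun]
    rw [tendsto_congr' hcongr]
    have hu := FRB7.flat_mul hSopen hhG (hGgood 1) hflat j
    simpa using (tendsto_const_nhds (x := (0:ℂ))).sub hu
  -- class constants for the coefficients
  have hAc : ∀ i : ℕ, ∃ C, 0 < C ∧ ∃ σ, 0 < σ ∧ ∀ j : ℕ, ∀ z ∈ S,
      ‖iteratedDeriv j (aa i) z‖ ≤ C * σ ^ j * (j.factorial : ℝ) * M j := by
    intro i
    by_cases hi : i < d
    · obtain ⟨C, hC, σ, hσ, hb⟩ := (ha ⟨i, hi⟩).2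
      exact ⟨C, hC, σ, hσ, by rw [haa_lt i hi]; exact hb⟩
    · refine ⟨1, one_pos, 1, one_pos, fun j z hz => ?_⟩
      rw [haa]
      simp only [dif_neg hi]
      rw [FRB7.iteratedDeriv_zero_fun]
      have hMj := hM.1 j
      have hfj : (0:ℝ) < (j.factorial : ℝ) := by positivity
      have hkey : (0:ℝ) ≤ 1 * 1 ^ j * (j.factorial : ℝ) * M j := by positivity
      simpa using hkey
  choose Cs hCs0 σs hσs0 hCb using hAc
  set Cmax : ℝ := (∑ i ∈ Finset.range d, Cs i) + 1 with hCmaxdef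
  set σmax : ℝ := (∑ i ∈ Finset.range d, σs i) + 1 with hσmaxdef
  have hCmax0 : 0 < Cmax := by
    rw [hCmaxdef]
    have : (0:ℝ) ≤ ∑ i ∈ Finset.range d, Cs i :=
      Finset.sum_nonneg (fun i _ => (hCs0 i).le)
    linarith
  have hσmax0 : 0 < σmax := by
    rw [hσmaxdef]
    have : (0:ℝ) ≤ ∑ i ∈ Finset.range d, σs i :=
      Finset.sum_nonneg (fun i _ => (hσs0 i).le)
    linarith
  have hCle : ∀ i, i < d → Cs i ≤ Cmax := by
    intro i hi
    rw [hCmaxdef]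
    have := Finset.single_le_sum (f := Cs) (fun j _ => (hCs0 j).le) (Finset.mem_range.2 hi)
    linarith
  have hσle : ∀ i, i < d → σs i ≤ σmax := by
    intro i hi
    rw [hσmaxdef]
    have := Finset.single_le_sum (f := σs) (fun j _ => (hσs0 j).le) (Finset.mem_range.2 hi)
    linarith
  set eps : ℂ → ℝ := fun z => Cmax * hFun M (σmax * ‖z‖) with hepsdef
  have heps_nonneg : ∀ z ∈ S, 0 ≤ eps z := by
    intro z hz
    have hz0 : (0:ℝ) < ‖z‖ := by simp only [norm_pos_iff]; exact hz.1
    have := FRB2.hFun_nonneg hM (by positivity : (0:ℝ) ≤ σmax * ‖z‖)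
    rw [hepsdef]
    positivity
  have heps_flat_bound : ∀ i, i < d → Fl i → ∀ z ∈ S, ‖aa i z‖ ≤ eps z := by
    intro i hi hfl z hz
    have hz0 : (0:ℝ) < ‖z‖ := by simp only [norm_pos_iff]; exact hz.1
    have h1 := FRB6.flat_hFun_bound hγ2 hM (haaA i) hfl (hCs0 i) (hσs0 i) (hCb i) z hz
    refine h1.trans ?_
    rw [hepsdef]
    have h2 : hFun M (σs i * ‖z‖) ≤ hFun M (σmax * ‖z‖) := by
      apply FRB2.hFun_mono hM (mul_pos (hσs0 i) hz0)
      exact mul_le_mul_of_nonneg_right (hσle i hi) hz0.le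
    apply mul_le_mul (hCle i hi) h2 (FRB2.hFun_nonneg hM (mul_pos (hσs0 i) hz0).le) hCmax0.le
  -- moderate growth constant
  obtain ⟨A, hA1, hAmg⟩ := FRB.mg_exists hM
  -- smallness of h
  obtain ⟨Bh1, hBh10, hBh1⟩ := hhG.2 1
  have hh_small : ∀ z ∈ S, ‖h z‖ ≤ Bh1 * ‖z‖ := by
    intro z hz
    have := FRB6.sector_flat_taylor hγ2 hhA hBh10
      (fun p hp => by
        have : p = 0 := by omega
        subst this
        exact hflat 0) hBh1 z hz
    simpa using this
  set ρh : ℝ := 1 / (Bh1 + 1) with hρhdef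
  have hρh0 : 0 < ρh := by rw [hρhdef]; positivity
  have hh_le_one : ∀ z ∈ S, ‖z‖ ≤ ρh → ‖h z‖ ≤ 1 := by
    intro z hz hzρ
    have h1 := hh_small z hz
    have h2 : Bh1 * ‖z‖ ≤ Bh1 * ρh := mul_le_mul_of_nonneg_left hzρ hBh10
    have h3 : Bh1 * ρh ≤ 1 := by
      rw [hρhdef]
      rw [mul_one_div, div_le_one (by linarith)]
      linarith
    linarith
  -- the key recursion
  have hCL : ∀ ρ : ℝ, 0 < ρ → ρ ≤ ρh →
      ∀ m, m ≤ d → (∀ m', m' < m → Fl (d - 1 - m')) →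
      ∀ z ∈ S, ‖z‖ ≤ ρ → ‖h z‖ ^ m * ‖G m z‖ ≤ (m : ℝ) * eps z := by
    intro ρ hρ0 hρle m
    induction m with
    | zero =>
      intro _ _ z hz _
      rw [hG0 z hz]
      simp
    | succ m ih =>
      intro hm1 hFlats z hz hzρ
      have hmd : m < d := by omega
      have hIH := ih (by omega) (fun m' hm' => hFlats m' (by omega)) z hz hzρ
      have hrec := hGrec m hmd z hz
      have hflatm : Fl (d - 1 - m) := hFlats m (by omega)
      have haabound : ‖aa (d - 1 - m) z‖ ≤ eps z :=
        heps_flat_bound _ (by omega) hflatm z hz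
      have hh1 : ‖h z‖ ≤ 1 := hh_le_one z hz (hzρ.trans hρle)
      have heps0 := heps_nonneg z hz
      have key : h z * G (m+1) z = G m z - aa (d - 1 - m) z := by
        rw [hrec]; ring
      calc ‖h z‖ ^ (m+1) * ‖G (m+1) z‖ = ‖h z‖ ^ m * ‖h z * G (m+1) z‖ := by
            rw [pow_succ, norm_mul]; ring
        _ = ‖h z‖ ^ m * ‖G m z - aa (d - 1 - m) z‖ := by rw [key]
        _ ≤ ‖h z‖ ^ m * (‖G m z‖ + ‖aa (d - 1 - m) z‖) := by
            apply mul_le_mul_of_nonneg_left (norm_sub_le _ _) (by positivity)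
        _ = ‖h z‖ ^ m * ‖G m z‖ + ‖h z‖ ^ m * ‖aa (d - 1 - m) z‖ := by ring
        _ ≤ (m : ℝ) * eps z + 1 * eps z := by
            apply add_le_add hIH
            apply mul_le_mul (pow_le_one₀ (norm_nonneg _) hh1) haabound (norm_nonneg _)
              zero_le_one
        _ = ((m + 1 : ℕ) : ℝ) * eps z := by push_cast; ring
  -- membership conversions for shrunk sectors
  have hsub : ∀ ρ : ℝ, 0 < ρ → ∀ z ∈ Sector γ (min r (ENNReal.ofReal ρ)), z ∈ S ∧ ‖z‖ ≤ ρ := by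
    intro ρ hρ0 z hz
    constructor
    · exact FRB.sector_mono (min_le_left _ _) hz
    · have h1 : z ∈ Sector γ (ENNReal.ofReal ρ) := FRB.sector_mono (min_le_right _ _) hz
      exact ((FRB.mem_sector_ofReal_iff.1 h1).2.2).le
  have hr''pos : ∀ ρ : ℝ, 0 < ρ → 0 < min r (ENNReal.ofReal ρ) :=
    fun ρ hρ0 => lt_min hr0 (ENNReal.ofReal_pos.2 hρ0)
  have hA0 : (0:ℝ) < A := lt_of_lt_of_le one_pos hA1
  by_cases hall : ∀ i, i < d → Fl i
  · -- Case A : all coefficients are flat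
    refine ⟨min r (ENNReal.ofReal ρh), hr''pos ρh hρh0, min_le_left _ _,
      max 1 ((d:ℝ) * Cmax), lt_of_lt_of_le one_pos (le_max_left _ _),
      A ^ d * σmax, by positivity, ?_⟩
    intro z hz
    obtain ⟨hzS, hzρ⟩ := hsub ρh hρh0 z hz
    have hz0 : (0:ℝ) < ‖z‖ := by simp only [norm_pos_iff]; exact hzS.1
    have hCLd := hCL ρh hρh0 le_rfl d le_rfl
      (fun m' hm' => hall (d - 1 - m') (by omega)) z hzS hzρ
    have hGd : G d z = 1 := by rw [hGapp]; simp
    rw [hGd] at hCLd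
    simp only [norm_one, mul_one] at hCLd
    have hle : ‖h z‖ ^ d ≤ ((d:ℝ) * Cmax) * hFun M (σmax * ‖z‖) := by
      rw [hepsdef] at hCLd
      calc ‖h z‖ ^ d ≤ (d:ℝ) * (Cmax * hFun M (σmax * ‖z‖)) := hCLd
        _ = ((d:ℝ) * Cmax) * hFun M (σmax * ‖z‖) := by ring
    have hroot := FRB2.hFun_root hM hA1 hAmg hd (mul_pos hσmax0 hz0) (norm_nonneg _) hle
    refine hroot.trans ?_
    have harg : A ^ d * (σmax * ‖z‖) = (A ^ d * σmax) * ‖z‖ := by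
      ring
    rw [harg]
  · -- Case B : some coefficient is not flat
    push_neg at hall
    obtain ⟨i₀, hi₀d, hi₀⟩ := hall
    have hex : ∃ m, m < d ∧ ¬ Fl (d - 1 - m) := by
      refine ⟨d - 1 - i₀, by omega, ?_⟩
      have he : d - 1 - (d - 1 - i₀) = i₀ := by omega
      rw [he]
      exact hi₀
    set m₀ := Nat.find hex with hm₀def
    have hspec := Nat.find_spec hex
    rw [← hm₀def] at hspec
    obtain ⟨hm₀d, hm₀nf⟩ := hspec
    have hm₀1 : 1 ≤ m₀ := by
      by_contra h0
      push_neg at h0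
      have h00 : m₀ = 0 := by omega
      rw [h00] at hm₀nf
      exact hm₀nf (by simpa using hFl_last)
    have hflats : ∀ m', m' < m₀ → Fl (d - 1 - m') := by
      intro m' hm'
      by_contra hnf
      have : m' < Nat.find hex := by rw [← hm₀def]; exact hm'
      exact Nat.find_min hex this ⟨by omega, hnf⟩
    set i := d - 1 - m₀ with hidef
    have hex2 : ∃ j, ¬ Tendsto (iteratedDeriv j (aa i)) (𝓝[S] 0) (𝓝 0) := by
      by_contra hcon
      push_neg at hcon
      apply hm₀nf
      rw [hFldef]
      exact fun j => hcon j
    set k := Nat.find hex2 with hkdef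
    have hknt := Nat.find_spec hex2
    rw [← hkdef] at hknt
    have hklow : ∀ p, p < k → Tendsto (iteratedDeriv p (aa i)) (𝓝[S] 0) (𝓝 0) := by
      intro p hp
      by_contra hnp
      have : p < Nat.find hex2 := by rw [← hkdef]; exact hp
      exact Nat.find_min hex2 this hnp
    obtain ⟨Bk1, hBk10, hBk1⟩ := (haaG i).2 (k+1)
    have hder_bound : ∀ w ∈ S, ‖deriv (iteratedDeriv k (aa i)) w‖ ≤ Bk1 := by
      intro w hw
      rw [← iteratedDeriv_succ]
      exact hBk1 w hw
    obtain ⟨α, hα, -⟩ := FRB5.exists_vertex_limit hγ0 hγ2 hr0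
      (FRB3.analyticOnNhd_iteratedDeriv (haaA i) k) hder_bound
    have hαne : α ≠ 0 := by
      intro h0
      rw [h0] at hα
      exact hknt hα
    obtain ⟨ρ₁, hρ₁0, hlow⟩ := FRB6.nonflat_lower hγ0 hγ2 hr0 (haaA i) hαne hklow hα hBk1
    set cα : ℝ := ‖α‖ / (2 * (k.factorial : ℝ)) with hcαdef
    have hα0 : (0:ℝ) < ‖α‖ := norm_pos_iff.2 hαne
    have hfk : (0:ℝ) < (k.factorial : ℝ) := by positivity
    have hcα0 : 0 < cα := by rw [hcαdef]; positivity
    obtain ⟨Bh2, hBh20, hBh2⟩ := hhG.2 (k+1)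
    have hh_ultra : ∀ z ∈ S, ‖h z‖ ≤ Bh2 * ‖z‖ ^ (k+1) := by
      intro z hz
      have h1 := FRB6.sector_flat_taylor hγ2 hhA hBh20 (fun p _ => hflat p) hBh2 z hz
      refine h1.trans ?_
      rw [div_le_iff₀ (by positivity : (0:ℝ) < ((k+1).factorial : ℝ))]
      have h2 : (1:ℝ) ≤ ((k+1).factorial : ℝ) := by exact_mod_cast (k+1).factorial_pos
      nlinarith [mul_nonneg hBh20 (pow_nonneg (norm_nonneg z) (k+1))]
    obtain ⟨RG, hRG0, hRGb⟩ := (hGgood (m₀+1)).2 0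
    have hRG : ∀ z ∈ S, ‖G (m₀+1) z‖ ≤ RG := by
      intro z hz
      have := hRGb z hz
      simpa using this
    set ρ₂ : ℝ := cα / (2 * (Bh2 * RG + 1)) with hρ₂def
    have hρ₂0 : 0 < ρ₂ := by rw [hρ₂def]; positivity
    set ρ : ℝ := min ρh (min ρ₁ ρ₂) with hρdef
    have hρ0 : 0 < ρ := lt_min hρh0 (lt_min hρ₁0 hρ₂0)
    have hρh' : ρ ≤ ρh := min_le_left _ _
    have hρ₁' : ρ ≤ ρ₁ := le_trans (min_le_right _ _) (min_le_left _ _)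
    have hρ₂' : ρ ≤ ρ₂ := le_trans (min_le_right _ _) (min_le_right _ _)
    -- the constant
    set CB : ℝ := 2 * ((m₀ : ℝ) * Cmax * (A ^ k * M k * σmax ^ k)) / cα with hCBdef
    refine ⟨min r (ENNReal.ofReal ρ), hr''pos ρ hρ0, min_le_left _ _,
      max 1 CB, lt_of_lt_of_le one_pos (le_max_left _ _),
      A ^ m₀ * A * σmax, by positivity, ?_⟩
    intro z hz
    obtain ⟨hzS, hzρ⟩ := hsub ρ hρ0 z hz
    have hz0 : (0:ℝ) < ‖z‖ := by simp only [norm_pos_iff]; exact hzS.1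
    have hzk : (0:ℝ) < ‖z‖ ^ k := by positivity
    -- recursion bound
    have hCLm := hCL ρ hρ0 hρh' m₀ hm₀d.le hflats z hzS hzρ
    -- lower bound for G m₀
    have hrec := hGrec m₀ hm₀d z hzS
    have hsmallprod : ‖h z * G (m₀+1) z‖ ≤ cα / 2 * ‖z‖ ^ k := by
      rw [norm_mul]
      have h1 : ‖h z‖ * ‖G (m₀+1) z‖ ≤ (Bh2 * ‖z‖ ^ (k+1)) * RG := by
        apply mul_le_mul (hh_ultra z hzS) (hRG z hzS) (norm_nonneg _)
        positivity
      refine h1.trans ?_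
      rw [pow_succ]
      have h2 : Bh2 * (‖z‖ ^ k * ‖z‖) * RG = (Bh2 * RG * ‖z‖) * ‖z‖ ^ k := by ring
      rw [h2]
      apply mul_le_mul_of_nonneg_right _ hzk.le
      have h3 : Bh2 * RG * ‖z‖ ≤ Bh2 * RG * ρ₂ := by
        apply mul_le_mul_of_nonneg_left (hzρ.trans hρ₂') (by positivity)
      refine h3.trans ?_
      rw [hρ₂def, ← mul_div_assoc,
        div_le_div_iff₀ (by positivity) (by norm_num : (0:ℝ) < 2)]
      linarith [mul_nonneg (mul_nonneg hBh20 hRG0) hcα0.le, hcα0.le]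
    have hGm₀low : cα / 2 * ‖z‖ ^ k ≤ ‖G m₀ z‖ := by
      have h1 : cα * ‖z‖ ^ k ≤ ‖aa i z‖ := by
        have := hlow z hzS (hzρ.trans hρ₁')
        rw [hcαdef]
        exact this
      have h2 : aa i z = G m₀ z - h z * G (m₀+1) z := by rw [hrec]; ring
      have h3 : ‖aa i z‖ ≤ ‖G m₀ z‖ + ‖h z * G (m₀+1) z‖ := by
        rw [h2]; exact norm_sub_le _ _
      have h4 := hsmallprod
      nlinarith [hzk.le]
    -- combine
    have hcomb : cα / 2 * ‖z‖ ^ k * ‖h z‖ ^ m₀ ≤ (m₀ : ℝ) * eps z := by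
      calc cα / 2 * ‖z‖ ^ k * ‖h z‖ ^ m₀ ≤ ‖G m₀ z‖ * ‖h z‖ ^ m₀ := by
            apply mul_le_mul_of_nonneg_right hGm₀low (by positivity)
        _ = ‖h z‖ ^ m₀ * ‖G m₀ z‖ := by ring
        _ ≤ (m₀ : ℝ) * eps z := hCLm
    have hdiv := FRB2.hFun_div_pow hM hA1 hAmg (mul_pos hσmax0 hz0) k
    have heps_le : eps z ≤ Cmax * ((A ^ k * M k * (σmax * ‖z‖) ^ k) * hFun M (A * (σmax * ‖z‖))) := by
      rw [hepsdef]
      exact mul_le_mul_of_nonneg_left hdiv hCmax0.le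
    have hfin : ‖h z‖ ^ m₀ ≤ CB * hFun M (A * (σmax * ‖z‖)) := by
      have hMk := hM.1 k
      have h5 : cα / 2 * ‖z‖ ^ k * ‖h z‖ ^ m₀ ≤
          (m₀ : ℝ) * Cmax * (A ^ k * M k * σmax ^ k) * ‖z‖ ^ k * hFun M (A * (σmax * ‖z‖)) := by
        refine hcomb.trans ?_
        calc (m₀ : ℝ) * eps z ≤ (m₀ : ℝ) * (Cmax * ((A ^ k * M k * (σmax * ‖z‖) ^ k) *
              hFun M (A * (σmax * ‖z‖)))) := by
              apply mul_le_mul_of_nonneg_left heps_le (by positivity)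
          _ = (m₀ : ℝ) * Cmax * (A ^ k * M k * σmax ^ k) * ‖z‖ ^ k *
              hFun M (A * (σmax * ‖z‖)) := by rw [mul_pow]; ring
      have h6 : cα / 2 * ‖h z‖ ^ m₀ ≤
          (m₀ : ℝ) * Cmax * (A ^ k * M k * σmax ^ k) * hFun M (A * (σmax * ‖z‖)) := by
        have h7 : cα / 2 * ‖h z‖ ^ m₀ * ‖z‖ ^ k ≤
            (m₀ : ℝ) * Cmax * (A ^ k * M k * σmax ^ k) * hFun M (A * (σmax * ‖z‖)) * ‖z‖ ^ k := by
          calc cα / 2 * ‖h z‖ ^ m₀ * ‖z‖ ^ k = cα / 2 * ‖z‖ ^ k * ‖h z‖ ^ m₀ := by ring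
            _ ≤ (m₀ : ℝ) * Cmax * (A ^ k * M k * σmax ^ k) * ‖z‖ ^ k *
                hFun M (A * (σmax * ‖z‖)) := h5
            _ = (m₀ : ℝ) * Cmax * (A ^ k * M k * σmax ^ k) * hFun M (A * (σmax * ‖z‖)) *
                ‖z‖ ^ k := by ring
        exact le_of_mul_le_mul_right h7 hzk
      rw [hCBdef]
      rw [div_mul_eq_mul_div, le_div_iff₀ hcα0]
      calc ‖h z‖ ^ m₀ * cα = 2 * (cα / 2 * ‖h z‖ ^ m₀) := by ring
        _ ≤ 2 * ((m₀ : ℝ) * Cmax * (A ^ k * M k * σmax ^ k) * hFun M (A * (σmax * ‖z‖))) := by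
            apply mul_le_mul_of_nonneg_left h6 (by norm_num)
        _ = 2 * ((m₀ : ℝ) * Cmax * (A ^ k * M k * σmax ^ k)) * hFun M (A * (σmax * ‖z‖)) := by
            ring
    have hroot := FRB2.hFun_root hM hA1 hAmg hm₀1
      (by positivity : (0:ℝ) < A * (σmax * ‖z‖)) (norm_nonneg _) hfin
    refine hroot.trans ?_
    have harg : A ^ m₀ * (A * (σmax * ‖z‖)) = (A ^ m₀ * A * σmax) * ‖z‖ := by
      ring
    rw [harg]
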